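/- arXiv:2512.13273 — 3 statements merged into one kernel-verified Lean document; each statement's English description precedes it below -/
import Mathlib

section
/- Let D be a triangulated category with two t-structures s1 = (C1^{≤0}, C1^{≥0}) and s2 = (C2^{≤0}, C2^{≥0}) such that C1^{≤0} ⊆ C2^{≤0}, and set ℋ = C2^{≤0} ∩ C1^{≥1}. Then the assignments φ(D^{≤0}, D^{≥0}) = (D^{≤0} ∩ C1^{≥1}, D^{≥1} ∩ C2^{≤0}) and ψ(𝒯,ℱ) = (C1^{≤0} * 𝒯, ℱ[1] * C2^{≥0}) are mutually inverse, order preserving bijections between the poset of t-structures (D^{≤0}, D^{≥0}) on D with C1^{≤0} ⊆ D^{≤0} ⊆ C2^{≤0} and the poset of s-torsion pairs in ℋ. -/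
open CategoryTheory Category Limits Pretriangulated

universe v u

variable (D : Type u) [Category.{v} D] [Preadditive D] [HasZeroObject D]
  [HasShift D ℤ] [∀ n : ℤ, (shiftFunctor D n).Additive]
  [Pretriangulated D] [HasBinaryBiproducts D]

/-- `shiftSet D S n` is the full subcategory `S[n]`: objects isomorphic to `X⟦n⟧`
with `X ∈ S`. -/
def shiftSet (S : Set D) (n : ℤ) : Set D :=
  {A | ∃ B ∈ S, Nonempty (A ≅ B⟦n⟧)}

/-- `starSet D X Y` is `X * Y`: the class of objects `A` admitting a distinguished
triangle `X → A → Y → X[1]` with `X ∈ 𝒳` and `Y ∈ 𝒴`. -/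
def starSet (X Y : Set D) : Set D :=
  {A | ∃ (B C : D) (f : B ⟶ A) (g : A ⟶ C) (h : C ⟶ B⟦(1 : ℤ)⟧),
    B ∈ X ∧ C ∈ Y ∧ Triangle.mk f g h ∈ distTriang D}

/-- `Hom(X, Y) = 0`: every morphism from an object of `X` to an object of `Y` is zero. -/
def homZero (X Y : Set D) : Prop :=
  ∀ A ∈ X, ∀ B ∈ Y, ∀ f : A ⟶ B, f = 0

/-- a class of objects closed under isomorphisms -/
def isoClosed (S : Set D) : Prop :=
  ∀ ⦃A B : D⦄, (A ≅ B) → A ∈ S → B ∈ S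

/-- an additive full subcategory (closed under isomorphisms) which is closed under
direct summands -/
structure AdditiveClosed (S : Set D) : Prop where
  iso : isoClosed D S
  zero : ∀ Z : D, IsZero Z → Z ∈ S
  sum : ∀ A ∈ S, ∀ B ∈ S, (A ⊞ B) ∈ S
  summand : ∀ A ∈ S, ∀ (X : D) (i : X ⟶ A) (p : A ⟶ X), i ≫ p = 𝟙 X → X ∈ S

/-- a torsion pair `(U, V)` in the triangulated category `D` -/
structure IsTorsionPair (U V : Set D) : Prop where
  addU : AdditiveClosed D U
  addV : AdditiveClosed D V
  hom_zero : homZero D U V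
  cover : ∀ A : D, A ∈ starSet D U V

/-- `t₁ ≼ t₂` for torsion pairs in a triangulated category: `U₁ ⊆ U₂` and `U₁[1] ⊆ U₂`. -/
def torsLE (U₁ U₂ : Set D) : Prop :=
  U₁ ⊆ U₂ ∧ shiftSet D U₁ 1 ⊆ U₂

/-- a torsion pair `(T, F)` in an (extension-closed) full subcategory `H` of `D`:
`T` and `F` are additive subcategories of `H` closed under direct summands,
`Hom(T, F) = 0`, and every object of `H` admits a distinguished triangle
`T → X → F → T[1]` with `T ∈ 𝒯`, `F ∈ ℱ`. -/
structure IsTorsionPairIn (H T F : Set D) : Prop where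
  subT : T ⊆ H
  subF : F ⊆ H
  isoT : ∀ ⦃A B : D⦄, (A ≅ B) → A ∈ T → B ∈ H → B ∈ T
  isoF : ∀ ⦃A B : D⦄, (A ≅ B) → A ∈ F → B ∈ H → B ∈ F
  zeroT : ∀ Z : D, IsZero Z → Z ∈ H → Z ∈ T
  zeroF : ∀ Z : D, IsZero Z → Z ∈ H → Z ∈ F
  sumT : ∀ A ∈ T, ∀ B ∈ T, (A ⊞ B) ∈ T
  sumF : ∀ A ∈ F, ∀ B ∈ F, (A ⊞ B) ∈ F
  summandT : ∀ A ∈ T, ∀ (X : D) (i : X ⟶ A) (p : A ⟶ X), i ≫ p = 𝟙 X → X ∈ H → X ∈ T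
  summandF : ∀ A ∈ F, ∀ (X : D) (i : X ⟶ A) (p : A ⟶ X), i ≫ p = 𝟙 X → X ∈ H → X ∈ F
  hom_zero : homZero D T F
  cover : ∀ A ∈ H, A ∈ starSet D T F

/-- an `s`-torsion pair in `H`: a torsion pair with moreover `Hom(T, F[-1]) = 0`. -/
structure IsSTorsionPairIn (H T F : Set D) extends IsTorsionPairIn D H T F : Prop where
  neg_hom_zero : ∀ A ∈ T, ∀ B ∈ F, ∀ f : A ⟶ B⟦(-1 : ℤ)⟧, f = 0

/-- the relation `≼` for torsion pairs in a subcategory `H`: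
`Hom(T, F') = 0` and `Hom(T, F'[-1]) = 0`. -/
def torsLEIn (T F' : Set D) : Prop :=
  homZero D T F' ∧ homZero D T (shiftSet D F' (-1))

/-- a `t`-structure `(L, G) = (S^{≤0}, S^{≥0})` on a triangulated (full) subcategory `S`
of `D` (take `S = Set.univ` for a `t`-structure on `D` itself). -/
structure IsTStructureOn (S L G : Set D) : Prop where
  subL : L ⊆ S
  subG : G ⊆ S
  isoL : ∀ ⦃A B : D⦄, (A ≅ B) → A ∈ L → B ∈ S → B ∈ L
  isoG : ∀ ⦃A B : D⦄, (A ≅ B) → A ∈ G → B ∈ S → B ∈ G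
  hom_zero : homZero D L (shiftSet D G (-1))
  cover : ∀ A ∈ S, A ∈ starSet D L (shiftSet D G (-1))
  shiftL : L ⊆ shiftSet D L (-1)
  shiftG : shiftSet D G (-1) ⊆ G

/-- a `t`-structure `(L, G) = (D^{≤0}, D^{≥0})` on `D`. -/
def IsTStructure (L G : Set D) : Prop := IsTStructureOn D Set.univ L G

/-- a triangulated full subcategory of `D`. -/
structure IsTriangulatedSub (S : Set D) : Prop where
  iso : isoClosed D S
  zero : ∀ Z : D, IsZero Z → Z ∈ S
  shift : ∀ (n : ℤ), ∀ A ∈ S, A⟦n⟧ ∈ S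
  ext₂ : ∀ (T : Triangle D), (T ∈ distTriang D) → T.obj₁ ∈ S → T.obj₃ ∈ S → T.obj₂ ∈ S

/-- an `m`-extended heart on `D`: a full subcategory of the form
`V^{≥ -(m-1)} ∩ V^{≤ 0}` for some `t`-structure `(V^{≤0}, V^{≥0})` on `D`. -/
def IsExtendedHeart (m : ℤ) (E : Set D) : Prop :=
  ∃ L G : Set D, IsTStructure D L G ∧ E = shiftSet D G (m - 1) ∩ L

/-- the relation `E₁ ≤ E₂` for `m`-extended hearts:
`E₁ ⊆ E₂[m] * E₂` and `E₂ ⊆ E₁ * E₁[-m]`. -/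
def extHeartLE (m : ℤ) (E₁ E₂ : Set D) : Prop :=
  E₁ ⊆ starSet D (shiftSet D E₂ m) E₂ ∧ E₂ ⊆ starSet D E₁ (shiftSet D E₁ (-m))

section St6Helpers

set_option linter.unusedSectionVars false
set_option maxHeartbeats 1000000

variable {D}

open ZeroObject

namespace St6

/-- all maps `A ⟶ B` vanish -/
def Hz (A B : D) : Prop := ∀ f : A ⟶ B, f = 0

lemma hz_of_map_shift_zero (n : ℤ) {A B : D} (f : A ⟶ B)
    (h : (shiftFunctor D n).map f = 0) : f = 0 :=
  (shiftFunctor D n).map_injective (by rw [h, Functor.map_zero])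

lemma hz_shift_tgt {A B : D} (m : ℤ) (h : Hz (A⟦-m⟧) B) : Hz A (B⟦m⟧) := by
  intro f
  apply hz_of_map_shift_zero (-m)
  have e := shiftFunctorCompIsoId D m (-m) (add_neg_cancel m)
  have h0 : (shiftFunctor D (-m)).map f ≫ e.hom.app B = 0 := h _
  calc (shiftFunctor D (-m)).map f
      = ((shiftFunctor D (-m)).map f ≫ e.hom.app B) ≫ e.inv.app B := by simp
    _ = 0 := by rw [h0, zero_comp]

lemma hz_shift_src {A B : D} (m : ℤ) (h : Hz A (B⟦-m⟧)) : Hz (A⟦m⟧) B := by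
  intro f
  apply hz_of_map_shift_zero (-m)
  have e := shiftFunctorCompIsoId D m (-m) (add_neg_cancel m)
  have h0 : e.inv.app A ≫ (shiftFunctor D (-m)).map f = 0 := h _
  calc (shiftFunctor D (-m)).map f
      = e.hom.app A ≫ (e.inv.app A ≫ (shiftFunctor D (-m)).map f) := by simp
    _ = 0 := by rw [h0, comp_zero]

lemma hz_shift_both {A B : D} (m : ℤ) (h : Hz A B) : Hz (A⟦m⟧) (B⟦m⟧) := by
  intro f
  apply hz_of_map_shift_zero (-m)
  have e := shiftFunctorCompIsoId D m (-m) (add_neg_cancel m)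
  have h0 : e.inv.app A ≫ ((shiftFunctor D (-m)).map f ≫ e.hom.app B) = 0 := h _
  calc (shiftFunctor D (-m)).map f
      = e.hom.app A ≫ (e.inv.app A ≫ ((shiftFunctor D (-m)).map f ≫ e.hom.app B)) ≫
          e.inv.app B := by simp
    _ = 0 := by rw [h0, zero_comp, comp_zero]

lemma hz_iso {A B A' B' : D} (eA : A' ≅ A) (eB : B ≅ B') (h : Hz A B) : Hz A' B' := by
  intro f
  have : eA.hom ≫ (eA.inv ≫ f ≫ eB.inv) ≫ eB.hom = f := by simp
  rw [← this, h (eA.inv ≫ f ≫ eB.inv), zero_comp, comp_zero]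

lemma hz_summand_src {A X W : D} (i : X ⟶ A) (p : A ⟶ X) (hip : i ≫ p = 𝟙 X)
    (h : Hz A W) : Hz X W := by
  intro f
  rw [← id_comp f, ← hip, assoc, h (p ≫ f), comp_zero]

lemma hz_summand_tgt {A X W : D} (i : X ⟶ A) (p : A ⟶ X) (hip : i ≫ p = 𝟙 X)
    (h : Hz W A) : Hz W X := by
  intro f
  rw [← comp_id f, ← hip, ← assoc, h (f ≫ i), zero_comp]

lemma hz_biprod_src {A B W : D} (hA : Hz A W) (hB : Hz B W) : Hz (A ⊞ B) W := by
  intro f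
  refine biprod.hom_ext' _ _ ?_ ?_
  · rw [hA (biprod.inl ≫ f), comp_zero]
  · rw [hB (biprod.inr ≫ f), comp_zero]

lemma hz_biprod_tgt {A B W : D} (hA : Hz W A) (hB : Hz W B) : Hz W (A ⊞ B) := by
  intro f
  refine biprod.hom_ext _ _ ?_ ?_
  · rw [hA (f ≫ biprod.fst), zero_comp]
  · rw [hB (f ≫ biprod.snd), zero_comp]

lemma hz_zero_src {Z W : D} (hZ : IsZero Z) : Hz Z W := fun f => hZ.eq_of_src f 0

lemma hz_zero_tgt {Z W : D} (hZ : IsZero Z) : Hz W Z := fun f => hZ.eq_of_tgt f 0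

-- squeezes
lemma hzMidCo {T : Triangle D} (hT : T ∈ distTriang D) {W : D}
    (h₁ : Hz W T.obj₁) (h₃ : Hz W T.obj₃) : Hz W T.obj₂ := by
  intro f
  obtain ⟨g, hg⟩ := Triangle.coyoneda_exact₂ T hT f (by rw [h₃ (f ≫ T.mor₂)])
  rw [hg, h₁ g, zero_comp]

lemma hzMidContra {T : Triangle D} (hT : T ∈ distTriang D) {W : D}
    (h₁ : Hz T.obj₁ W) (h₃ : Hz T.obj₃ W) : Hz T.obj₂ W := by
  intro f
  obtain ⟨g, hg⟩ := Triangle.yoneda_exact₂ T hT f (by rw [h₁ (T.mor₁ ≫ f)])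
  rw [hg, h₃ g, comp_zero]

lemma hzCo₁ {T : Triangle D} (hT : T ∈ distTriang D) {W : D}
    (h₁ : Hz W (T.obj₃⟦(-1 : ℤ)⟧)) (h₂ : Hz W T.obj₂) : Hz W T.obj₁ :=
  hzMidCo (inv_rot_of_distTriang T hT) h₁ h₂

lemma hzCo₃ {T : Triangle D} (hT : T ∈ distTriang D) {W : D}
    (h₂ : Hz W T.obj₂) (h₁ : Hz W (T.obj₁⟦(1 : ℤ)⟧)) : Hz W T.obj₃ :=
  hzMidCo (rot_of_distTriang T hT) h₂ h₁

lemma hzContra₃ {T : Triangle D} (hT : T ∈ distTriang D) {W : D}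
    (h₂ : Hz T.obj₂ W) (h₁ : Hz (T.obj₁⟦(1 : ℤ)⟧) W) : Hz T.obj₃ W :=
  hzMidContra (rot_of_distTriang T hT) h₂ h₁

-- retracts
lemma retract_of_mor₂_zero {T : Triangle D} (hT : T ∈ distTriang D) (h : T.mor₂ = 0) :
    ∃ s : T.obj₂ ⟶ T.obj₁, s ≫ T.mor₁ = 𝟙 T.obj₂ := by
  obtain ⟨g, hg⟩ := Triangle.coyoneda_exact₂ T hT (𝟙 T.obj₂) (by rw [id_comp, h])
  exact ⟨g, hg.symm⟩

lemma retract_of_mor₁_zero {T : Triangle D} (hT : T ∈ distTriang D) (h : T.mor₁ = 0) :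
    ∃ r : T.obj₃ ⟶ T.obj₂, T.mor₂ ≫ r = 𝟙 T.obj₂ := by
  obtain ⟨g, hg⟩ := Triangle.yoneda_exact₂ T hT (𝟙 T.obj₂) (by rw [h, zero_comp])
  exact ⟨g, hg.symm⟩

-- triangle transports
lemma dist_iso₁ {B A C B' : D} {f : B ⟶ A} {g : A ⟶ C} {h : C ⟶ B⟦(1 : ℤ)⟧}
    (hT : Triangle.mk f g h ∈ distTriang D) (e : B ≅ B') :
    Triangle.mk (e.inv ≫ f) g (h ≫ e.hom⟦(1 : ℤ)⟧') ∈ distTriang D := by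
  refine isomorphic_distinguished _ hT _ ?_
  refine Triangle.isoMk _ _ e.symm (Iso.refl _) (Iso.refl _) ?_ ?_ ?_
  · dsimp [Triangle.mk]; simp
  · dsimp [Triangle.mk]; simp
  · dsimp [Triangle.mk]; simp [← Functor.map_comp]

lemma dist_iso₂ {B A C A' : D} {f : B ⟶ A} {g : A ⟶ C} {h : C ⟶ B⟦(1 : ℤ)⟧}
    (hT : Triangle.mk f g h ∈ distTriang D) (e : A ≅ A') :
    Triangle.mk (f ≫ e.hom) (e.inv ≫ g) h ∈ distTriang D := by
  refine isomorphic_distinguished _ hT _ ?_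
  refine Triangle.isoMk _ _ (Iso.refl _) e.symm (Iso.refl _) ?_ ?_ ?_ <;> (dsimp [Triangle.mk]; simp)

lemma dist_iso₃ {B A C C' : D} {f : B ⟶ A} {g : A ⟶ C} {h : C ⟶ B⟦(1 : ℤ)⟧}
    (hT : Triangle.mk f g h ∈ distTriang D) (e : C ≅ C') :
    Triangle.mk f (g ≫ e.hom) (e.inv ≫ h) ∈ distTriang D := by
  refine isomorphic_distinguished _ hT _ ?_
  refine Triangle.isoMk _ _ (Iso.refl _) (Iso.refl _) e.symm ?_ ?_ ?_ <;> (dsimp [Triangle.mk]; simp)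

-- shift a triangle by 1
lemma dist_shift_one {B A C : D} {f : B ⟶ A} {g : A ⟶ C} {h : C ⟶ B⟦(1 : ℤ)⟧}
    (hT : Triangle.mk f g h ∈ distTriang D) :
    Triangle.mk ((shiftFunctor D (1 : ℤ)).map f) ((shiftFunctor D (1 : ℤ)).map g)
      (-((shiftFunctor D (1 : ℤ)).map h)) ∈ distTriang D := by
  refine isomorphic_distinguished _
    (rot_of_distTriang _ (rot_of_distTriang _ (rot_of_distTriang _ hT))) _ ?_
  refine Triangle.isoMk _ _ (show B⟦(1 : ℤ)⟧ ≅ B⟦(1 : ℤ)⟧ from Iso.mk (-𝟙 _) (-𝟙 _) (by simp) (by simp)) (Iso.refl _)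
    (show C⟦(1 : ℤ)⟧ ≅ C⟦(1 : ℤ)⟧ from Iso.mk (-𝟙 _) (-𝟙 _) (by simp) (by simp)) ?_ ?_ ?_
  · show f⟦(1 : ℤ)⟧' ≫ 𝟙 (A⟦(1 : ℤ)⟧) = (-𝟙 (B⟦(1 : ℤ)⟧)) ≫ (-(f⟦(1 : ℤ)⟧'))
    simp
  · show g⟦(1 : ℤ)⟧' ≫ (-𝟙 (C⟦(1 : ℤ)⟧)) = 𝟙 (A⟦(1 : ℤ)⟧) ≫ (-(g⟦(1 : ℤ)⟧'))
    simp
  · show (-(h⟦(1 : ℤ)⟧')) ≫ (-𝟙 (B⟦(1 : ℤ)⟧))⟦(1 : ℤ)⟧' = (-𝟙 (C⟦(1 : ℤ)⟧)) ≫ (-(h⟦(1 : ℤ)⟧'))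
    simp

-- shiftSet and starSet generalities
lemma shiftSet_iso {S : Set D} {n : ℤ} {A B : D} (e : A ≅ B) (hA : A ∈ shiftSet D S n) :
    B ∈ shiftSet D S n := by
  obtain ⟨C, hC, ⟨e'⟩⟩ := hA
  exact ⟨C, hC, ⟨e.symm ≪≫ e'⟩⟩

lemma mem_shiftSet_self {S : Set D} (n : ℤ) {A : D} (hA : A ∈ S) : A⟦n⟧ ∈ shiftSet D S n :=
  ⟨A, hA, ⟨Iso.refl _⟩⟩

lemma starSet_iso {X Y : Set D} {A B : D} (e : A ≅ B) (hA : A ∈ starSet D X Y) :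
    B ∈ starSet D X Y := by
  obtain ⟨P, Q, u, v, w, hP, hQ, hT⟩ := hA
  exact ⟨P, Q, u ≫ e.hom, e.inv ≫ v, w, hP, hQ, dist_iso₂ hT e⟩

/-- `A⟦-1⟧⟦1⟧ ≅ A` -/
noncomputable def negOneOne (A : D) : (A⟦(-1 : ℤ)⟧)⟦(1 : ℤ)⟧ ≅ A :=
  (shiftFunctorCompIsoId D (-1) 1 (by omega)).app A

/-- `A⟦1⟧⟦-1⟧ ≅ A` -/
noncomputable def oneNegOne (A : D) : (A⟦(1 : ℤ)⟧)⟦(-1 : ℤ)⟧ ≅ A :=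
  (shiftFunctorCompIsoId D 1 (-1) (by omega)).app A

-- ### consequences of the t-structure axioms

variable {L G : Set D}

lemma ts_hz (s : IsTStructure D L G) {A B : D} (hA : A ∈ L)
    (hB : B ∈ shiftSet D G (-1)) : Hz A B :=
  fun f => s.hom_zero A hA B hB f

lemma ts_shift_G' (s : IsTStructure D L G) {B : D} (hB : B ∈ shiftSet D G (-1)) :
    B⟦(-1 : ℤ)⟧ ∈ shiftSet D G (-1) := by
  obtain ⟨C, hC, ⟨e⟩⟩ := hB
  exact ⟨C⟦(-1 : ℤ)⟧, s.shiftG (mem_shiftSet_self _ hC),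
    ⟨(shiftFunctor D (-1 : ℤ)).mapIso e⟩⟩

lemma ts_shift_L (s : IsTStructure D L G) {A : D} (hA : A ∈ L) : A⟦(1 : ℤ)⟧ ∈ L := by
  obtain ⟨B, hB, ⟨e⟩⟩ := s.shiftL hA
  exact s.isoL (((shiftFunctor D (1 : ℤ)).mapIso e ≪≫ negOneOne B).symm) hB (Set.mem_univ _)

lemma ts_mem_L_of (s : IsTStructure D L G) {A : D}
    (h : ∀ B ∈ shiftSet D G (-1), Hz A B) : A ∈ L := by
  obtain ⟨X, Y, f, g, w, hX, hY, hT⟩ := s.cover A (Set.mem_univ A)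
  obtain ⟨q, hq⟩ := Triangle.yoneda_exact₃ _ hT (𝟙 Y)
    ((comp_id _).trans (h Y hY g))
  have hq0 : q = 0 := ts_hz s (ts_shift_L s hX) hY q
  have hY0 : IsZero Y := by
    rw [IsZero.iff_id_eq_zero, hq, hq0, comp_zero]; exact rfl
  have : IsIso (Triangle.mk f g w).mor₁ :=
    (Triangle.isZero₃_iff_isIso₁ _ hT).1 hY0
  exact s.isoL (@asIso _ _ _ _ (Triangle.mk f g w).mor₁ this) hX (Set.mem_univ _)

lemma ts_mem_G'_of (s : IsTStructure D L G) {B : D}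
    (h : ∀ A ∈ L, Hz A B) : B ∈ shiftSet D G (-1) := by
  obtain ⟨X, Y, f, g, w, hX, hY, hT⟩ := s.cover B (Set.mem_univ B)
  obtain ⟨q, hq⟩ := Triangle.coyoneda_exact₂ _ (inv_rot_of_distTriang _ hT) (𝟙 X)
    ((id_comp _).trans (h X hX f))
  have hq0 : q = 0 := ts_hz s hX (ts_shift_G' s hY) q
  have hX0 : IsZero X := by
    rw [IsZero.iff_id_eq_zero, hq, hq0, zero_comp]; exact rfl
  have : IsIso (Triangle.mk f g w).mor₂ :=
    (Triangle.isZero₁_iff_isIso₂ _ hT).1 hX0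
  exact shiftSet_iso (@asIso _ _ _ _ (Triangle.mk f g w).mor₂ this).symm hY

lemma ts_ext_L (s : IsTStructure D L G) {B A C : D} {f : B ⟶ A} {g : A ⟶ C}
    {w : C ⟶ B⟦(1 : ℤ)⟧} (hT : Triangle.mk f g w ∈ distTriang D)
    (hB : B ∈ L) (hC : C ∈ L) : A ∈ L :=
  ts_mem_L_of s fun W hW => hzMidContra hT (ts_hz s hB hW) (ts_hz s hC hW)

lemma ts_ext_G' (s : IsTStructure D L G) {B A C : D} {f : B ⟶ A} {g : A ⟶ C}
    {w : C ⟶ B⟦(1 : ℤ)⟧} (hT : Triangle.mk f g w ∈ distTriang D)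
    (hB : B ∈ shiftSet D G (-1)) (hC : C ∈ shiftSet D G (-1)) :
    A ∈ shiftSet D G (-1) :=
  ts_mem_G'_of s fun W hW => hzMidCo hT (ts_hz s hW hB) (ts_hz s hW hC)

lemma ts_zero_L (s : IsTStructure D L G) {Z : D} (hZ : IsZero Z) : Z ∈ L :=
  ts_mem_L_of s fun _ _ => hz_zero_src hZ

lemma ts_zero_G' (s : IsTStructure D L G) {Z : D} (hZ : IsZero Z) :
    Z ∈ shiftSet D G (-1) :=
  ts_mem_G'_of s fun _ _ => hz_zero_tgt hZ

lemma ts_iso_L (s : IsTStructure D L G) {A B : D} (e : A ≅ B) (hA : A ∈ L) : B ∈ L :=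
  s.isoL e hA (Set.mem_univ _)

lemma ts_mem_G_of_shift (s : IsTStructure D L G) {A : D}
    (h : A⟦(-1 : ℤ)⟧ ∈ shiftSet D G (-1)) : A ∈ G := by
  obtain ⟨C, hC, ⟨e⟩⟩ := h
  exact s.isoG ((negOneOne C).symm ≪≫ ((shiftFunctor D (1 : ℤ)).mapIso e).symm ≪≫
    negOneOne A) hC (Set.mem_univ _)

-- ### part 1 : φ is well defined, ψ ∘ φ = id

section Phi

variable {L₁ G₁ L₂ G₂ L G : Set D}

lemma G'_anti {LA GA LB GB : Set D} (sA : IsTStructure D LA GA) (sB : IsTStructure D LB GB)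
    (hAB : LA ⊆ LB) : shiftSet D GB (-1) ⊆ shiftSet D GA (-1) :=
  fun _ hB => ts_mem_G'_of sA fun _ hA => ts_hz sB (hAB hA) hB

lemma phi_storsion (s₁ : IsTStructure D L₁ G₁) (s₂ : IsTStructure D L₂ G₂)
    (s : IsTStructure D L G) (hL₁ : L₁ ⊆ L) (hL₂ : L ⊆ L₂) :
    IsSTorsionPairIn D (L₂ ∩ shiftSet D G₁ (-1))
      (L ∩ shiftSet D G₁ (-1)) (shiftSet D G (-1) ∩ L₂) where
  subT := fun _ hA => ⟨hL₂ hA.1, hA.2⟩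
  subF := fun _ hB => ⟨hB.2, G'_anti s₁ s hL₁ hB.1⟩
  isoT := fun _ _ e hA _ => ⟨ts_iso_L s e hA.1, shiftSet_iso e hA.2⟩
  isoF := fun _ _ e hA _ => ⟨shiftSet_iso e hA.1, ts_iso_L s₂ e hA.2⟩
  zeroT := fun _ hZ _ => ⟨ts_zero_L s hZ, ts_zero_G' s₁ hZ⟩
  zeroF := fun _ hZ _ => ⟨ts_zero_G' s hZ, ts_zero_L s₂ hZ⟩
  sumT := fun _ hA _ hB =>
    ⟨ts_mem_L_of s fun W hW => hz_biprod_src (ts_hz s hA.1 hW) (ts_hz s hB.1 hW),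
     ts_mem_G'_of s₁ fun W hW => hz_biprod_tgt (ts_hz s₁ hW hA.2) (ts_hz s₁ hW hB.2)⟩
  sumF := fun _ hA _ hB =>
    ⟨ts_mem_G'_of s fun W hW => hz_biprod_tgt (ts_hz s hW hA.1) (ts_hz s hW hB.1),
     ts_mem_L_of s₂ fun W hW => hz_biprod_src (ts_hz s₂ hA.2 hW) (ts_hz s₂ hB.2 hW)⟩
  summandT := fun _ hA X i p hip _ =>
    ⟨ts_mem_L_of s fun W hW => hz_summand_src i p hip (ts_hz s hA.1 hW),
     ts_mem_G'_of s₁ fun W hW => hz_summand_tgt i p hip (ts_hz s₁ hW hA.2)⟩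
  summandF := fun _ hA X i p hip _ =>
    ⟨ts_mem_G'_of s fun W hW => hz_summand_tgt i p hip (ts_hz s hW hA.1),
     ts_mem_L_of s₂ fun W hW => hz_summand_src i p hip (ts_hz s₂ hA.2 hW)⟩
  hom_zero := fun _ hA _ hB f => ts_hz s hA.1 hB.1 f
  cover := by
    intro A hA
    obtain ⟨X, Y, u, v, w, hX, hY, hT⟩ := s.cover A (Set.mem_univ A)
    refine ⟨X, Y, u, v, w, ⟨hX, ?_⟩, ⟨hY, ?_⟩, hT⟩
    · exact ts_mem_G'_of s₁ fun W hW =>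
        hzCo₁ hT (ts_hz s (hL₁ hW) (ts_shift_G' s hY)) (ts_hz s₁ hW hA.2)
    · exact ts_mem_L_of s₂ fun W hW =>
        hzContra₃ hT (ts_hz s₂ hA.1 hW) (ts_hz s₂ (hL₂ (ts_shift_L s hX)) hW)
  neg_hom_zero := fun _ hA _ hB f => ts_hz s hA.1 (ts_shift_G' s hB.1) f

lemma phi_psi_L (s₁ : IsTStructure D L₁ G₁) (s : IsTStructure D L G) (hL₁ : L₁ ⊆ L) : starSet D L₁ (L ∩ shiftSet D G₁ (-1)) = L := by
  ext A
  constructor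
  · rintro ⟨X, Y, u, v, w, hX, hY, hT⟩
    exact ts_ext_L s hT (hL₁ hX) hY.1
  · intro hA
    obtain ⟨X, Y, u, v, w, hX, hY, hT⟩ := s₁.cover A (Set.mem_univ A)
    refine ⟨X, Y, u, v, w, hX, ⟨?_, hY⟩, hT⟩
    exact ts_mem_L_of s fun W hW =>
      hzContra₃ hT (ts_hz s hA hW) (ts_hz s (hL₁ (ts_shift_L s₁ hX)) hW)

lemma phi_psi_G (s₂ : IsTStructure D L₂ G₂) (s : IsTStructure D L G) (hL₂ : L ⊆ L₂) :
    starSet D (shiftSet D (shiftSet D G (-1) ∩ L₂) 1) G₂ = G := by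
  ext B
  constructor
  · rintro ⟨P, Q, u, v, w, ⟨P₀, ⟨hP₀G, _⟩, ⟨e⟩⟩, hQ, hT⟩
    refine ts_mem_G_of_shift s (ts_mem_G'_of s fun W hW => ?_)
    refine hz_shift_tgt (-1) ?_
    have hWs : (W⟦-(-1 : ℤ)⟧ : D) = W⟦(1 : ℤ)⟧ := by norm_num
    rw [hWs]
    refine hzMidCo (T := Triangle.mk u v w) hT ?_ ?_
    · exact hz_iso (Iso.refl _) e.symm (hz_shift_both 1 (ts_hz s hW hP₀G))
    · exact hz_shift_src 1 (ts_hz s₂ (hL₂ hW) (mem_shiftSet_self (-1) hQ))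
  · intro hB
    obtain ⟨X, Y, u, v, w, hX, hY, hT⟩ := s₂.cover (B⟦(-1 : ℤ)⟧) (Set.mem_univ _)
    have hT' := dist_iso₂ (dist_shift_one hT) (negOneOne B)
    refine ⟨X⟦(1 : ℤ)⟧, Y⟦(1 : ℤ)⟧, _, _, _, ⟨X, ⟨?_, hX⟩, ⟨Iso.refl _⟩⟩,
      ts_mem_G_of_shift s₂ (shiftSet_iso (oneNegOne Y).symm hY), hT'⟩
    exact ts_mem_G'_of s fun W hW =>
      hzCo₁ hT (ts_hz s hW (G'_anti s s₂ hL₂ (ts_shift_G' s₂ hY)))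
        (ts_hz s hW ⟨B, hB, ⟨Iso.refl _⟩⟩)

end Phi

-- ### part 2 : ψ is well defined, φ ∘ ψ = id

section Psi

variable {L₁ G₁ L₂ G₂ T F : Set D}

lemma hz_shift_tgt' {A B : D} (h : Hz (A⟦(1 : ℤ)⟧) B) : Hz A (B⟦(-1 : ℤ)⟧) := by
  have := hz_shift_tgt (m := -1) (A := A) (B := B)
  simp only [neg_neg] at this
  exact this h

lemma psi_T_char (tp : IsSTorsionPairIn D (L₂ ∩ shiftSet D G₁ (-1)) T F)
    {A : D} (hA : A ∈ L₂ ∩ shiftSet D G₁ (-1)) (h : ∀ B ∈ F, Hz A B) : A ∈ T := by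
  obtain ⟨TA, FA, u, v, w, hTA, hFA, hT⟩ := tp.cover A hA
  obtain ⟨sA, hsA⟩ := retract_of_mor₂_zero hT (h FA hFA v)
  exact tp.summandT TA hTA A sA u hsA hA

lemma psi_F_char (tp : IsSTorsionPairIn D (L₂ ∩ shiftSet D G₁ (-1)) T F)
    {B : D} (hB : B ∈ L₂ ∩ shiftSet D G₁ (-1)) (h : ∀ A ∈ T, Hz A B) : B ∈ F := by
  obtain ⟨TB, FB, u, v, w, hTB, hFB, hT⟩ := tp.cover B hB
  obtain ⟨r, hr⟩ := retract_of_mor₁_zero hT (h TB hTB u)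
  exact tp.summandF FB hFB B v r hr hB

lemma psi_hz_L'F (s₁ : IsTStructure D L₁ G₁)
    (tp : IsSTorsionPairIn D (L₂ ∩ shiftSet D G₁ (-1)) T F)
    {A B : D} (hA : A ∈ starSet D L₁ T) (hB : B ∈ F) : Hz A B := by
  obtain ⟨X, Y, u, v, w, hX, hY, hT⟩ := hA
  exact hzMidContra hT (ts_hz s₁ hX (tp.subF hB).2) (fun f => tp.hom_zero Y hY B hB f)

lemma psi_hz_L'G₂' (s₂ : IsTStructure D L₂ G₂) (h12 : L₁ ⊆ L₂)
    (tp : IsSTorsionPairIn D (L₂ ∩ shiftSet D G₁ (-1)) T F)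
    {A B : D} (hA : A ∈ starSet D L₁ T) (hB : B ∈ shiftSet D G₂ (-1)) : Hz A B := by
  obtain ⟨X, Y, u, v, w, hX, hY, hT⟩ := hA
  exact hzMidContra hT (ts_hz s₂ (h12 hX) hB) (ts_hz s₂ (tp.subT hY).1 hB)

lemma psi_L'_sub_L₂ (s₂ : IsTStructure D L₂ G₂) (h12 : L₁ ⊆ L₂)
    (tp : IsSTorsionPairIn D (L₂ ∩ shiftSet D G₁ (-1)) T F) :
    starSet D L₁ T ⊆ L₂ := by
  rintro A ⟨X, Y, u, v, w, hX, hY, hT⟩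
  exact ts_ext_L s₂ hT (h12 hX) (tp.subT hY).1

lemma psi_mem_L' (s₁ : IsTStructure D L₁ G₁) (s₂ : IsTStructure D L₂ G₂) (h12 : L₁ ⊆ L₂)
    (tp : IsSTorsionPairIn D (L₂ ∩ shiftSet D G₁ (-1)) T F)
    {A : D} (h1 : ∀ B ∈ F, Hz A B) (h2 : ∀ B ∈ shiftSet D G₂ (-1), Hz A B) :
    A ∈ starSet D L₁ T := by
  obtain ⟨X₁, Y₁, a, b, c, hX₁, hY₁, hTA⟩ := s₁.cover A (Set.mem_univ A)
  refine ⟨X₁, Y₁, a, b, c, hX₁, ?_, hTA⟩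
  have hY₁L₂ : Y₁ ∈ L₂ := ts_mem_L_of s₂ fun B hB =>
    hzContra₃ hTA (h2 B hB) (ts_hz s₂ (h12 (ts_shift_L s₁ hX₁)) hB)
  exact psi_T_char tp ⟨hY₁L₂, hY₁⟩ fun B hB =>
    hzContra₃ hTA (h1 B hB) (ts_hz s₁ (ts_shift_L s₁ hX₁) (tp.subF hB).2)

lemma psi_hz_L₁N (s₁ : IsTStructure D L₁ G₁) (s₂ : IsTStructure D L₂ G₂) (h12 : L₁ ⊆ L₂)
    (tp : IsSTorsionPairIn D (L₂ ∩ shiftSet D G₁ (-1)) T F)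
    {A B : D} (hA : A ∈ L₁) (hB : B ∈ starSet D F (shiftSet D G₂ (-1))) : Hz A B := by
  obtain ⟨P, Q, u, v, w, hP, hQ, hT⟩ := hB
  exact hzMidCo hT (ts_hz s₁ hA (tp.subF hP).2) (ts_hz s₂ (h12 hA) hQ)

lemma psi_hz_TN (s₂ : IsTStructure D L₂ G₂)
    (tp : IsSTorsionPairIn D (L₂ ∩ shiftSet D G₁ (-1)) T F)
    {A B : D} (hA : A ∈ T) (hB : B ∈ starSet D F (shiftSet D G₂ (-1))) : Hz A B := by
  obtain ⟨P, Q, u, v, w, hP, hQ, hT⟩ := hB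
  exact hzMidCo hT (fun f => tp.hom_zero A hA P hP f) (ts_hz s₂ (tp.subT hA).1 hQ)

lemma psi_mem_N (s₁ : IsTStructure D L₁ G₁) (s₂ : IsTStructure D L₂ G₂) (h12 : L₁ ⊆ L₂)
    (tp : IsSTorsionPairIn D (L₂ ∩ shiftSet D G₁ (-1)) T F)
    {B : D} (h1 : ∀ A ∈ L₁, Hz A B) (h2 : ∀ A ∈ T, Hz A B) :
    B ∈ starSet D F (shiftSet D G₂ (-1)) := by
  obtain ⟨X, Y, u, v, w, hX, hY, hT⟩ := s₂.cover B (Set.mem_univ B)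
  refine ⟨X, Y, u, v, w, ?_, hY, hT⟩
  have hXG₁ : X ∈ shiftSet D G₁ (-1) := ts_mem_G'_of s₁ fun W hW =>
    hzCo₁ hT (ts_hz s₂ (h12 hW) (ts_shift_G' s₂ hY)) (h1 W hW)
  exact psi_F_char tp ⟨hX, hXG₁⟩ fun A hA =>
    hzCo₁ hT (ts_hz s₂ (tp.subT hA).1 (ts_shift_G' s₂ hY)) (h2 A hA)

lemma psi_mem_Gn_of (s₂ : IsTStructure D L₂ G₂)
    {B : D} (hB : B⟦(-1 : ℤ)⟧ ∈ starSet D F (shiftSet D G₂ (-1))) :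
    B ∈ starSet D (shiftSet D F 1) G₂ := by
  obtain ⟨P, Q, u, v, w, hP, hQ, hT⟩ := hB
  exact ⟨P⟦(1 : ℤ)⟧, Q⟦(1 : ℤ)⟧, _, _, _, ⟨P, hP, ⟨Iso.refl _⟩⟩,
    ts_mem_G_of_shift s₂ (shiftSet_iso (oneNegOne Q).symm hQ),
    dist_iso₂ (dist_shift_one hT) (negOneOne B)⟩

lemma psi_mem_N_of_Gn (s₁ : IsTStructure D L₁ G₁) (s₂ : IsTStructure D L₂ G₂)
    (h12 : L₁ ⊆ L₂) (tp : IsSTorsionPairIn D (L₂ ∩ shiftSet D G₁ (-1)) T F)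
    {B : D} (hB : B ∈ starSet D (shiftSet D F 1) G₂) :
    B⟦(-1 : ℤ)⟧ ∈ starSet D F (shiftSet D G₂ (-1)) := by
  obtain ⟨P, Q, u, v, w, ⟨P₀, hP₀, ⟨e⟩⟩, hQ, hT⟩ := hB
  refine psi_mem_N s₁ s₂ h12 tp (fun W hW => hz_shift_tgt' ?_) (fun W hW => hz_shift_tgt' ?_)
  · refine hzMidCo (T := Triangle.mk u v w) hT ?_ ?_
    · exact hz_iso (Iso.refl _) e.symm (hz_shift_both 1 (ts_hz s₁ hW (tp.subF hP₀).2))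
    · exact hz_shift_src 1 (ts_hz s₂ (h12 hW) (mem_shiftSet_self (-1) hQ))
  · refine hzMidCo (T := Triangle.mk u v w) hT ?_ ?_
    · exact hz_iso (Iso.refl _) e.symm
        (hz_shift_both 1 (fun f => tp.hom_zero W hW P₀ hP₀ f))
    · exact hz_shift_src 1 (ts_hz s₂ (tp.subT hW).1 (mem_shiftSet_self (-1) hQ))

lemma psi_N_eq (s₁ : IsTStructure D L₁ G₁) (s₂ : IsTStructure D L₂ G₂)
    (h12 : L₁ ⊆ L₂) (tp : IsSTorsionPairIn D (L₂ ∩ shiftSet D G₁ (-1)) T F) :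
    shiftSet D (starSet D (shiftSet D F 1) G₂) (-1) =
      starSet D F (shiftSet D G₂ (-1)) := by
  ext B
  constructor
  · rintro ⟨C, hC, ⟨e⟩⟩
    exact starSet_iso e.symm (psi_mem_N_of_Gn s₁ s₂ h12 tp hC)
  · intro hB
    exact ⟨B⟦(1 : ℤ)⟧, psi_mem_Gn_of s₂ (starSet_iso (oneNegOne B).symm hB),
      ⟨(oneNegOne B).symm⟩⟩

lemma psi_cover (s₁ : IsTStructure D L₁ G₁) (s₂ : IsTStructure D L₂ G₂)
    (h12 : L₁ ⊆ L₂) (tp : IsSTorsionPairIn D (L₂ ∩ shiftSet D G₁ (-1)) T F) (A : D) :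
    A ∈ starSet D (starSet D L₁ T) (starSet D F (shiftSet D G₂ (-1))) := by
  -- s₁-truncation of A
  obtain ⟨X₁, Y₁, a, b, c, hX₁, hY₁, hTA⟩ := s₁.cover A (Set.mem_univ A)
  -- s₂-truncation of Y₁
  obtain ⟨P, Q, p, q, r, hPL₂, hQ, hTP⟩ := s₂.cover Y₁ (Set.mem_univ Y₁)
  have hPG₁ : P ∈ shiftSet D G₁ (-1) := ts_mem_G'_of s₁ fun W hW =>
    hzCo₁ hTP (ts_hz s₂ (h12 hW) (ts_shift_G' s₂ hQ)) (ts_hz s₁ hW hY₁)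
  -- torsion decomposition of P
  obtain ⟨T₀, F₀, t, f0, d, hT₀, hF₀, hTF⟩ := tp.cover P ⟨hPL₂, hPG₁⟩
  -- the aisle part X
  obtain ⟨X, x, y, hTX⟩ := distinguished_cocone_triangle₂ (t ≫ p ≫ c)
  obtain ⟨φ, hφ₁, hφ₂⟩ : ∃ φ : X ⟶ A, x ≫ φ = 𝟙 X₁ ≫ a ∧ y ≫ (t ≫ p) = φ ≫ b :=
    complete_distinguished_triangle_morphism₂
      (Triangle.mk x y (t ≫ p ≫ c)) (Triangle.mk a b c) hTX hTA (𝟙 X₁) (t ≫ p)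
      (by dsimp [Triangle.mk]; simp)
  rw [id_comp] at hφ₁
  -- the coaisle part Z
  obtain ⟨Z, ψ, χ, hTZ⟩ := distinguished_cocone_triangle φ
  refine ⟨X, Z, φ, ψ, χ, ⟨X₁, T₀, x, y, _, hX₁, hT₀, hTX⟩, ?_, hTZ⟩
  -- every map from `W` with `Hz W Q` and `Hz W F₀` to `Z` vanishes
  have key : ∀ W : D, Hz W Q → Hz W F₀ → Hz W Z := by
    intro W hWQ hWF g
    -- injectivity of `φ⟦1⟧ ∘ -` on maps `W ⟶ X⟦1⟧`
    have inj : ∀ u : W ⟶ (X⟦(1 : ℤ)⟧ : D), u ≫ φ⟦(1 : ℤ)⟧' = 0 → u = 0 := by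
      intro u hu
      have hφ₂' : y⟦(1 : ℤ)⟧' ≫ (t ≫ p)⟦(1 : ℤ)⟧' = φ⟦(1 : ℤ)⟧' ≫ b⟦(1 : ℤ)⟧' := by
        rw [← Functor.map_comp, ← Functor.map_comp, hφ₂]
      -- u ≫ y⟦1⟧ ≫ t⟦1⟧ ≫ p⟦1⟧ = 0
      have h1 : ((u ≫ y⟦(1 : ℤ)⟧') ≫ t⟦(1 : ℤ)⟧') ≫ p⟦(1 : ℤ)⟧' = 0 := by
        calc ((u ≫ y⟦(1 : ℤ)⟧') ≫ t⟦(1 : ℤ)⟧') ≫ p⟦(1 : ℤ)⟧'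
            = u ≫ (y⟦(1 : ℤ)⟧' ≫ (t ≫ p)⟦(1 : ℤ)⟧') := by
              simp [Functor.map_comp]
          _ = (u ≫ φ⟦(1 : ℤ)⟧') ≫ b⟦(1 : ℤ)⟧' := by rw [hφ₂']; simp
          _ = 0 := by rw [hu, zero_comp]
      -- kill the composite through Q
      obtain ⟨e₁, he₁⟩ : ∃ e₁ : W ⟶ Q, (u ≫ y⟦(1 : ℤ)⟧') ≫ t⟦(1 : ℤ)⟧' = e₁ ≫ r :=
        Triangle.coyoneda_exact₃ _ (rot_of_distTriang _ hTP)
          ((u ≫ y⟦(1 : ℤ)⟧') ≫ t⟦(1 : ℤ)⟧')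
          (by show ((u ≫ y⟦(1 : ℤ)⟧') ≫ t⟦(1 : ℤ)⟧') ≫ (-p⟦(1 : ℤ)⟧') = 0; rw [Preadditive.comp_neg, h1, neg_zero])
      have h2 : (u ≫ y⟦(1 : ℤ)⟧') ≫ t⟦(1 : ℤ)⟧' = 0 := by
        rw [he₁, hWQ e₁, zero_comp]
      -- kill the composite through F₀
      obtain ⟨e₂, he₂⟩ : ∃ e₂ : W ⟶ F₀, u ≫ y⟦(1 : ℤ)⟧' = e₂ ≫ d :=
        Triangle.coyoneda_exact₃ _ (rot_of_distTriang _ hTF)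
          (u ≫ y⟦(1 : ℤ)⟧') (by show (u ≫ y⟦(1 : ℤ)⟧') ≫ (-t⟦(1 : ℤ)⟧') = 0; rw [Preadditive.comp_neg, h2, neg_zero])
      have h3 : u ≫ y⟦(1 : ℤ)⟧' = 0 := by
        rw [he₂, hWF e₂, zero_comp]
      -- factor u through X₁⟦1⟧
      obtain ⟨n, hn⟩ : ∃ n : W ⟶ (X₁⟦(1 : ℤ)⟧ : D), u = n ≫ x⟦(1 : ℤ)⟧' :=
        Triangle.coyoneda_exact₂ _ (dist_shift_one hTX) u h3
      -- n kills a⟦1⟧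
      have h4 : n ≫ a⟦(1 : ℤ)⟧' = 0 := by
        have hφ₁' : x⟦(1 : ℤ)⟧' ≫ φ⟦(1 : ℤ)⟧' = a⟦(1 : ℤ)⟧' := by
          rw [← Functor.map_comp, hφ₁]
        rw [← hφ₁', ← assoc, ← hn, hu]
      -- factor n through Y₁
      obtain ⟨m, hm⟩ : ∃ m : W ⟶ Y₁, n = m ≫ c :=
        Triangle.coyoneda_exact₃ _ (rot_of_distTriang _ hTA) n
          (by show n ≫ (-a⟦(1 : ℤ)⟧') = 0; rw [Preadditive.comp_neg, h4, neg_zero])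
      -- m factors through T₀
      obtain ⟨h₂', hh₂⟩ : ∃ h₂' : W ⟶ P, m = h₂' ≫ p :=
        Triangle.coyoneda_exact₂ _ hTP m (hWQ _)
      obtain ⟨k₂, hk₂⟩ : ∃ k₂ : W ⟶ T₀, h₂' = k₂ ≫ t :=
        Triangle.coyoneda_exact₂ _ hTF h₂' (hWF _)
      -- conclude using (t ≫ p ≫ c) ≫ x⟦1⟧ = 0
      have hz31 : (t ≫ p ≫ c) ≫ x⟦(1 : ℤ)⟧' = 0 :=
        comp_distTriang_mor_zero₃₁ _ hTX
      rw [hn, hm, hh₂, hk₂]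
      calc (((k₂ ≫ t) ≫ p) ≫ c) ≫ x⟦(1 : ℤ)⟧'
          = k₂ ≫ (t ≫ p ≫ c) ≫ x⟦(1 : ℤ)⟧' := by simp
        _ = 0 := by rw [hz31, comp_zero]
    -- now the main argument
    have h5 := comp_distTriang_mor_zero₃₁ _ hTZ
    replace h5 : χ ≫ φ⟦(1 : ℤ)⟧' = 0 := h5
    have hu0 : g ≫ χ = 0 := by
      refine inj (g ≫ χ) ?_
      rw [assoc, h5, comp_zero]
    obtain ⟨g', hg'⟩ : ∃ g' : W ⟶ A, g = g' ≫ ψ :=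
      Triangle.coyoneda_exact₃ _ hTZ g hu0
    -- surjectivity part
    obtain ⟨h₁', hh₁'⟩ : ∃ h₁' : W ⟶ P, g' ≫ b = h₁' ≫ p :=
      Triangle.coyoneda_exact₂ _ hTP (g' ≫ b) (hWQ _)
    obtain ⟨k, hk⟩ : ∃ k : W ⟶ T₀, h₁' = k ≫ t :=
      Triangle.coyoneda_exact₂ _ hTF h₁' (hWF _)
    have h6 := comp_distTriang_mor_zero₂₃ _ hTA
    replace h6 : b ≫ c = 0 := h6
    have hkz : k ≫ (t ≫ p ≫ c) = 0 := by
      calc k ≫ (t ≫ p ≫ c) = ((k ≫ t) ≫ p) ≫ c := by simp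
        _ = (h₁' ≫ p) ≫ c := by rw [← hk]
        _ = (g' ≫ b) ≫ c := by rw [← hh₁']
        _ = 0 := by rw [assoc, h6, comp_zero]
    obtain ⟨m', hm'⟩ : ∃ m' : W ⟶ X, k = m' ≫ y :=
      Triangle.coyoneda_exact₃ _ hTX k hkz
    have hsub : (g' - m' ≫ φ) ≫ b = 0 := by
      rw [Preadditive.sub_comp, assoc, ← hφ₂, ← assoc, ← hm', ← assoc, ← hk, ← hh₁', sub_self]
    obtain ⟨n', hn'⟩ : ∃ n' : W ⟶ X₁, g' - m' ≫ φ = n' ≫ a :=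
      Triangle.coyoneda_exact₂ _ hTA (g' - m' ≫ φ) hsub
    have hφψ : φ ≫ ψ = 0 := comp_distTriang_mor_zero₁₂ _ hTZ
    have haψ : a ≫ ψ = 0 := by rw [← hφ₁, assoc, hφψ, comp_zero]
    have hdec : g' = n' ≫ a + m' ≫ φ := by rw [← hn', sub_add_cancel]
    calc g = g' ≫ ψ := hg'
      _ = (n' ≫ a + m' ≫ φ) ≫ ψ := by rw [← hdec]
      _ = 0 := by rw [Preadditive.add_comp, assoc, assoc, hφψ, haψ, comp_zero, comp_zero, add_zero]
  exact psi_mem_N s₁ s₂ h12 tp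
    (fun W hW => key W (ts_hz s₂ (h12 hW) hQ) (ts_hz s₁ hW (tp.subF hF₀).2))
    (fun W hW => key W (ts_hz s₂ (tp.subT hW).1 hQ) (fun f => tp.hom_zero W hW F₀ hF₀ f))

lemma psi_tstructure (s₁ : IsTStructure D L₁ G₁) (s₂ : IsTStructure D L₂ G₂)
    (h12 : L₁ ⊆ L₂) (tp : IsSTorsionPairIn D (L₂ ∩ shiftSet D G₁ (-1)) T F) :
    IsTStructure D (starSet D L₁ T) (starSet D (shiftSet D F 1) G₂) where
  subL := fun _ _ => Set.mem_univ _
  subG := fun _ _ => Set.mem_univ _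
  isoL := fun _ _ e hA _ => starSet_iso e hA
  isoG := fun _ _ e hA _ => starSet_iso e hA
  hom_zero := by
    intro A hA B hB f
    rw [psi_N_eq s₁ s₂ h12 tp] at hB
    obtain ⟨X, Y, u, v, w, hX, hY, hT⟩ := hA
    exact hzMidContra hT (psi_hz_L₁N s₁ s₂ h12 tp hX hB) (psi_hz_TN s₂ tp hY hB) f
  cover := by
    intro A _
    rw [psi_N_eq s₁ s₂ h12 tp]
    exact psi_cover s₁ s₂ h12 tp A
  shiftL := by
    intro A hA
    have hA' := hA
    obtain ⟨X, Y, u, v, w, hX, hY, hT⟩ := hA'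
    refine ⟨A⟦(1 : ℤ)⟧, psi_mem_L' s₁ s₂ h12 tp ?_ ?_, ⟨(oneNegOne A).symm⟩⟩
    · intro B hB
      refine hz_shift_src 1 ?_
      exact hzMidContra hT (ts_hz s₁ hX (ts_shift_G' s₁ (tp.subF hB).2))
        (fun f => tp.neg_hom_zero Y hY B hB f)
    · intro B hB
      exact hz_shift_src 1 (psi_hz_L'G₂' s₂ h12 tp hA (ts_shift_G' s₂ hB))
  shiftG := by
    intro B hB
    rw [psi_N_eq s₁ s₂ h12 tp] at hB
    obtain ⟨P, Q, u, v, w, hP, hQ, hT⟩ := hB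
    refine psi_mem_Gn_of s₂ (psi_mem_N s₁ s₂ h12 tp
      (fun W hW => hz_shift_tgt' ?_) (fun W hW => hz_shift_tgt' ?_))
    · refine hzMidCo (T := Triangle.mk u v w) hT ?_ ?_
      · exact ts_hz s₁ (ts_shift_L s₁ hW) (tp.subF hP).2
      · exact hz_shift_src 1 (ts_hz s₂ (h12 hW) (ts_shift_G' s₂ hQ))
    · refine hzMidCo (T := Triangle.mk u v w) hT ?_ ?_
      · exact hz_shift_src 1 (fun f => tp.neg_hom_zero W hW P hP f)
      · exact hz_shift_src 1 (ts_hz s₂ (tp.subT hW).1 (ts_shift_G' s₂ hQ))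

lemma psi_L₁_sub (s₁ : IsTStructure D L₁ G₁) (s₂ : IsTStructure D L₂ G₂)
    (tp : IsSTorsionPairIn D (L₂ ∩ shiftSet D G₁ (-1)) T F) :
    L₁ ⊆ starSet D L₁ T := by
  intro A hA
  exact ⟨A, (0 : D), 𝟙 A, 0, 0, hA,
    tp.zeroT (0 : D) (isZero_zero D) ⟨ts_zero_L s₂ (isZero_zero D), ts_zero_G' s₁ (isZero_zero D)⟩,
    contractible_distinguished A⟩

lemma psi_phi_T (s₁ : IsTStructure D L₁ G₁) (s₂ : IsTStructure D L₂ G₂)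
    (h12 : L₁ ⊆ L₂) (tp : IsSTorsionPairIn D (L₂ ∩ shiftSet D G₁ (-1)) T F) :
    starSet D L₁ T ∩ shiftSet D G₁ (-1) = T := by
  ext A
  constructor
  · rintro ⟨⟨X, Y, u, v, w, hX, hY, hT⟩, hG⟩
    obtain ⟨r, hr⟩ := retract_of_mor₁_zero hT (ts_hz s₁ hX hG u)
    exact tp.summandT Y hY A v r hr ⟨ts_ext_L s₂ hT (h12 hX) (tp.subT hY).1, hG⟩
  · intro hA
    exact ⟨⟨(0 : D), A, 0, 𝟙 A, 0, ts_zero_L s₁ (isZero_zero D), hA,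
      contractible_distinguished₁ A⟩, (tp.subT hA).2⟩

lemma psi_phi_F (s₁ : IsTStructure D L₁ G₁) (s₂ : IsTStructure D L₂ G₂)
    (h12 : L₁ ⊆ L₂) (tp : IsSTorsionPairIn D (L₂ ∩ shiftSet D G₁ (-1)) T F) :
    shiftSet D (starSet D (shiftSet D F 1) G₂) (-1) ∩ L₂ = F := by
  rw [psi_N_eq s₁ s₂ h12 tp]
  ext B
  constructor
  · rintro ⟨⟨P, Q, u, v, w, hP, hQ, hT⟩, hL₂⟩
    obtain ⟨sB, hsB⟩ := retract_of_mor₂_zero hT (ts_hz s₂ hL₂ hQ v)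
    have hBG₁ : B ∈ shiftSet D G₁ (-1) := ts_mem_G'_of s₁ fun W hW =>
      hzMidCo hT (ts_hz s₁ hW (tp.subF hP).2) (ts_hz s₂ (h12 hW) hQ)
    exact tp.summandF P hP B sB u hsB ⟨hL₂, hBG₁⟩
  · intro hB
    exact ⟨⟨B, (0 : D), 𝟙 B, 0, 0, hB, ts_zero_G' s₂ (isZero_zero D),
      contractible_distinguished B⟩, (tp.subF hB).1⟩

end Psi

end St6

end St6Helpers

/-- Corollary 3.11 (2): for `t`-structures `s₁ = (L₁, G₁)`,
`s₂ = (L₂, G₂)` with `L₁ ⊆ L₂` and `ℋ = C₂^{≤0} ∩ C₁^{≥1} = L₂ ∩ G₁[-1]`, the maps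
`φ(D^{≤0},D^{≥0}) = (D^{≤0} ∩ C₁^{≥1}, D^{≥1} ∩ C₂^{≤0})` and
`ψ(𝒯,ℱ) = (C₁^{≤0} * 𝒯, ℱ[1] * C₂^{≥0})` are mutually inverse, order preserving
bijections between `t`-structures on `D` with `C₁^{≤0} ⊆ D^{≤0} ⊆ C₂^{≤0}` and
`s`-torsion pairs in `ℋ`. -/
theorem stmt6 (L₁ G₁ L₂ G₂ : Set D)
    (s₁ : IsTStructure D L₁ G₁) (s₂ : IsTStructure D L₂ G₂) (h : L₁ ⊆ L₂) :
    -- φ is well defined and ψ ∘ φ = id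
    (∀ L G, IsTStructure D L G → L₁ ⊆ L → L ⊆ L₂ →
       IsSTorsionPairIn D (L₂ ∩ shiftSet D G₁ (-1))
         (L ∩ shiftSet D G₁ (-1)) (shiftSet D G (-1) ∩ L₂) ∧
       starSet D L₁ (L ∩ shiftSet D G₁ (-1)) = L ∧
       starSet D (shiftSet D (shiftSet D G (-1) ∩ L₂) 1) G₂ = G) ∧
    -- ψ is well defined and φ ∘ ψ = id
    (∀ T F, IsSTorsionPairIn D (L₂ ∩ shiftSet D G₁ (-1)) T F →
       IsTStructure D (starSet D L₁ T) (starSet D (shiftSet D F 1) G₂) ∧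
       L₁ ⊆ starSet D L₁ T ∧ starSet D L₁ T ⊆ L₂ ∧
       starSet D L₁ T ∩ shiftSet D G₁ (-1) = T ∧
       shiftSet D (starSet D (shiftSet D F 1) G₂) (-1) ∩ L₂ = F) ∧
    -- φ preserves the orders (inclusion of aisles to inclusion of torsion classes)
    (∀ L G L' G', IsTStructure D L G → IsTStructure D L' G' →
       L₁ ⊆ L → L ⊆ L₂ → L₁ ⊆ L' → L' ⊆ L₂ → L ⊆ L' →
       L ∩ shiftSet D G₁ (-1) ⊆ L' ∩ shiftSet D G₁ (-1)) ∧
    -- ψ preserves the orders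
    (∀ T F T' F', IsSTorsionPairIn D (L₂ ∩ shiftSet D G₁ (-1)) T F →
       IsSTorsionPairIn D (L₂ ∩ shiftSet D G₁ (-1)) T' F' → T ⊆ T' →
       starSet D L₁ T ⊆ starSet D L₁ T') := by
  refine ⟨?_, ?_, ?_, ?_⟩
  · intro L G s hL₁ hL₂
    exact ⟨St6.phi_storsion s₁ s₂ s hL₁ hL₂, St6.phi_psi_L s₁ s hL₁, St6.phi_psi_G s₂ s hL₂⟩
  · intro T F tp
    exact ⟨St6.psi_tstructure s₁ s₂ h tp, St6.psi_L₁_sub s₁ s₂ tp,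
      St6.psi_L'_sub_L₂ s₂ h tp, St6.psi_phi_T s₁ s₂ h tp, St6.psi_phi_F s₁ s₂ h tp⟩
  · intro L G L' G' _ _ _ _ _ _ hLL'
    exact fun A hA => ⟨hLL' hA.1, hA.2⟩
  · rintro T F T' F' _ _ hTT' A ⟨X, Y, u, v, w, hX, hY, hT⟩
    exact ⟨X, Y, u, v, w, hX, hTT' hY, hT⟩
end

section
/- Let D be a triangulated category with a t-structure 𝒰 = (U^{≤0}, U^{≥0}), let m be a positive integer, and set m-ℋ = U^{≥-(m-1)} ∩ U^{≤0}. Then the assignments φ(V^{≤0}, V^{≥0}) = (V^{≤0} ∩ U^{≥-(m-1)}, V^{≥1} ∩ U^{≤0}) and ψ(𝒯,ℱ) = (U^{≤-m} * 𝒯, ℱ[1] * U^{≥0}) are mutually inverse, order preserving bijections between the poset of t-structures (V^{≤0}, V^{≥0}) on D with U^{≤-m} ⊆ V^{≤0} ⊆ U^{≤0} and the poset of s-torsion pairs in m-ℋ. -/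
open CategoryTheory Category Limits Pretriangulated

universe v u

variable (D : Type u) [Category.{v} D] [Preadditive D] [HasZeroObject D]
  [HasShift D ℤ] [∀ n : ℤ, (shiftFunctor D n).Additive]
  [Pretriangulated D] [HasBinaryBiproducts D]

section Aux
set_option linter.unusedSectionVars false
variable {D}

lemma mem_shiftSet {S : Set D} {A : D} {n : ℤ} (hA : A ∈ S) : A⟦n⟧ ∈ shiftSet D S n :=
  ⟨A, hA, ⟨Iso.refl _⟩⟩

lemma shiftSet_isoClosed (S : Set D) (n : ℤ) : isoClosed D (shiftSet D S n) := by
  rintro A B e ⟨C, hC, ⟨e'⟩⟩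
  exact ⟨C, hC, ⟨e.symm ≪≫ e'⟩⟩

noncomputable def isoShiftZero (A : D) : A⟦(0 : ℤ)⟧ ≅ A := (shiftFunctorZero D ℤ).app A

noncomputable def isoShiftShift (A : D) (a b c : ℤ) (h : a + b = c) : A⟦a⟧⟦b⟧ ≅ A⟦c⟧ :=
  ((shiftFunctorAdd' D a b c h).app A).symm

lemma mem_shiftSet_zero {S : Set D} {A : D} (hA : A ∈ S) : A ∈ shiftSet D S 0 :=
  ⟨A, hA, ⟨(isoShiftZero A).symm⟩⟩

lemma shift_mem_shiftSet {S : Set D} {A : D} {a : ℤ} (b : ℤ) (hA : A ∈ shiftSet D S a) :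
    A⟦b⟧ ∈ shiftSet D S (a + b) := by
  obtain ⟨C, hC, ⟨e⟩⟩ := hA
  exact ⟨C, hC, ⟨(shiftFunctor D b).mapIso e ≪≫ isoShiftShift C a b _ rfl⟩⟩

lemma shiftSet_shiftSet (S : Set D) (a b : ℤ) :
    shiftSet D (shiftSet D S a) b = shiftSet D S (a + b) := by
  ext A
  constructor
  · rintro ⟨C, ⟨C', hC', ⟨e'⟩⟩, ⟨e⟩⟩
    exact ⟨C', hC', ⟨e ≪≫ (shiftFunctor D b).mapIso e' ≪≫ isoShiftShift C' a b _ rfl⟩⟩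
  · rintro ⟨C, hC, ⟨e⟩⟩
    exact ⟨C⟦a⟧, mem_shiftSet hC, ⟨e ≪≫ (isoShiftShift C a b _ rfl).symm⟩⟩

lemma shiftSet_index_congr {S : Set D} {a b : ℤ} (h : a = b) {A : D}
    (hA : A ∈ shiftSet D S a) : A ∈ shiftSet D S b := h ▸ hA

lemma homZero_of_iso {A B A' B' : D} (eA : A ≅ A') (eB : B ≅ B')
    (h : ∀ f : A' ⟶ B', f = 0) : ∀ f : A ⟶ B, f = 0 := fun f => by
  have h2 := h (eA.inv ≫ f ≫ eB.hom)
  have h3 : f = eA.hom ≫ (eA.inv ≫ f ≫ eB.hom) ≫ eB.inv := by simp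
  rw [h3, h2, zero_comp, comp_zero]

lemma homZero_shift {A B : D} (h : ∀ f : A ⟶ B, f = 0) (n : ℤ) :
    ∀ g : A⟦n⟧ ⟶ B⟦n⟧, g = 0 := fun g => by
  apply (shiftFunctor D (-n)).map_injective
  rw [Functor.map_zero]
  exact homZero_of_iso (isoShiftShift A n (-n) 0 (by ring) ≪≫ isoShiftZero A)
    (isoShiftShift B n (-n) 0 (by ring) ≪≫ isoShiftZero B) h _

lemma homZero_up {A B : D} (h : ∀ f : A ⟶ B⟦(-1 : ℤ)⟧, f = 0) :
    ∀ g : A⟦(1 : ℤ)⟧ ⟶ B, g = 0 := fun g => by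
  have e : B⟦(-1 : ℤ)⟧⟦(1 : ℤ)⟧ ≅ B := isoShiftShift B (-1) 1 0 (by ring) ≪≫ isoShiftZero B
  have h1 := homZero_shift h 1 (g ≫ e.inv)
  have h2 : g = (g ≫ e.inv) ≫ e.hom := by simp
  rw [h2, h1, zero_comp]

lemma homZero_down {A B : D} (h : ∀ f : A⟦(1 : ℤ)⟧ ⟶ B, f = 0) :
    ∀ g : A ⟶ B⟦(-1 : ℤ)⟧, g = 0 := fun g => by
  apply (shiftFunctor D (1 : ℤ)).map_injective
  rw [Functor.map_zero]
  exact homZero_of_iso (Iso.refl _)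
    (isoShiftShift B (-1) 1 0 (by ring) ≪≫ isoShiftZero B) h _

lemma midVanishCov {T : Triangle D} (hT : T ∈ distTriang D) {P : D}
    (h₁ : ∀ g : P ⟶ T.obj₁, g = 0) (h₃ : ∀ g : P ⟶ T.obj₃, g = 0) :
    ∀ f : P ⟶ T.obj₂, f = 0 := fun f => by
  obtain ⟨g, hg⟩ := Triangle.coyoneda_exact₂ T hT f (h₃ _)
  rw [hg, h₁ g, zero_comp]

lemma midVanishContra {T : Triangle D} (hT : T ∈ distTriang D) {P : D}
    (h₁ : ∀ g : T.obj₁ ⟶ P, g = 0) (h₃ : ∀ g : T.obj₃ ⟶ P, g = 0) :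
    ∀ f : T.obj₂ ⟶ P, f = 0 := fun f => by
  obtain ⟨g, hg⟩ := Triangle.yoneda_exact₂ T hT f (h₁ _)
  rw [hg, h₃ g, comp_zero]

lemma vanish₁Cov {T : Triangle D} (hT : T ∈ distTriang D) {P : D}
    (h₃ : ∀ g : P ⟶ T.obj₃⟦(-1 : ℤ)⟧, g = 0) {f : P ⟶ T.obj₁} (hf : f ≫ T.mor₁ = 0) :
    f = 0 := by
  obtain ⟨g, hg⟩ := Triangle.coyoneda_exact₂ _ (inv_rot_of_distTriang T hT) f hf
  rw [hg, h₃ g]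
  exact zero_comp

lemma vanish₃Contra {T : Triangle D} (hT : T ∈ distTriang D) {P : D}
    (h₁ : ∀ g : T.obj₁⟦(1 : ℤ)⟧ ⟶ P, g = 0) {f : T.obj₃ ⟶ P} (hf : T.mor₂ ≫ f = 0) :
    f = 0 := by
  obtain ⟨g, hg⟩ := Triangle.yoneda_exact₃ T hT f hf
  rw [hg, h₁ g, comp_zero]

lemma starSet_isoClosed (X Y : Set D) : isoClosed D (starSet D X Y) := by
  rintro A B e ⟨P, Q, f, g, h, hP, hQ, hT⟩
  refine ⟨P, Q, f ≫ e.hom, e.inv ≫ g, h, hP, hQ, ?_⟩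
  refine isomorphic_distinguished _ hT _ ?_
  exact Triangle.isoMk _ _ (Iso.refl _) e.symm (Iso.refl _) (by simp [Triangle.mk]) (by simp [Triangle.mk]) (by simp [Triangle.mk])

end Aux

section TStr
set_option linter.unusedSectionVars false
set_option maxHeartbeats 800000
variable {D}
variable {L G : Set D} (hV : IsTStructure D L G)
include hV

lemma L_iso : isoClosed D L := fun _ _ e h => hV.isoL e h (Set.mem_univ _)
lemma G_iso : isoClosed D G := fun _ _ e h => hV.isoG e h (Set.mem_univ _)

lemma shift_plus_memL {A : D} (hA : A ∈ L) : A⟦(1 : ℤ)⟧ ∈ L := by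
  obtain ⟨B, hB, ⟨e⟩⟩ := hV.shiftL hA
  have i : A⟦(1 : ℤ)⟧ ≅ B :=
    (shiftFunctor D (1 : ℤ)).mapIso e ≪≫ isoShiftShift B (-1) 1 0 (by ring) ≪≫ isoShiftZero B
  exact L_iso hV i.symm hB

lemma shift_minus_memG {A : D} (hA : A ∈ G) : A⟦(-1 : ℤ)⟧ ∈ G :=
  hV.shiftG (mem_shiftSet hA)

lemma shift_nonneg_memL {A : D} (hA : A ∈ L) (k : ℤ) (hk : 0 ≤ k) : A⟦k⟧ ∈ L := by
  suffices h : ∀ n : ℕ, A⟦(n : ℤ)⟧ ∈ L by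
    have h2 := h k.toNat
    exact L_iso hV (eqToIso (by rw [Int.toNat_of_nonneg hk])) h2
  intro n
  induction n with
  | zero => exact L_iso hV ((isoShiftZero A).symm ≪≫ eqToIso (by norm_num)) hA
  | succ n ih =>
      exact L_iso hV (isoShiftShift A (n : ℤ) 1 _ (by push_cast; ring))
        (shift_plus_memL hV ih)

lemma shift_nonpos_memG {A : D} (hA : A ∈ G) (k : ℤ) (hk : k ≤ 0) : A⟦k⟧ ∈ G := by
  suffices h : ∀ n : ℕ, A⟦-(n : ℤ)⟧ ∈ G by
    have h2 := h (-k).toNat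
    exact G_iso hV (eqToIso (by rw [Int.toNat_of_nonneg (by omega : 0 ≤ -k), neg_neg])) h2
  intro n
  induction n with
  | zero => exact G_iso hV ((isoShiftZero A).symm ≪≫ eqToIso (by norm_num)) hA
  | succ n ih =>
      exact G_iso hV (isoShiftShift A (-(n : ℤ)) (-1) _ (by push_cast; ring))
        (shift_minus_memG hV ih)

lemma L_anti {a b : ℤ} (h : a ≤ b) : shiftSet D L b ⊆ shiftSet D L a := by
  rintro A ⟨C, hC, ⟨e⟩⟩
  exact ⟨C⟦b - a⟧, shift_nonneg_memL hV hC _ (by omega),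
    ⟨e ≪≫ (isoShiftShift C (b - a) a b (by ring)).symm⟩⟩

lemma G_mono {a b : ℤ} (h : a ≤ b) : shiftSet D G a ⊆ shiftSet D G b := by
  rintro A ⟨C, hC, ⟨e⟩⟩
  exact ⟨C⟦a - b⟧, shift_nonpos_memG hV hC _ (by omega),
    ⟨e ≪≫ (isoShiftShift C (a - b) b a (by ring)).symm⟩⟩

lemma vanish0 {A B : D} (hA : A ∈ L) (hB : B ∈ G) :
    ∀ (c : ℤ), c ≤ -1 → ∀ f : A ⟶ B⟦c⟧, f = 0 := by
  suffices h : ∀ (n : ℕ) (B : D), B ∈ G → ∀ f : A ⟶ B⟦-1 - (n : ℤ)⟧, f = 0 by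
    intro c hc f
    obtain ⟨n, hn⟩ : ∃ n : ℕ, c = -1 - (n : ℤ) := ⟨(-1 - c).toNat, by omega⟩
    subst hn
    exact h _ B hB f
  intro n
  induction n with
  | zero =>
      intro B hB f
      exact hV.hom_zero A hA _ ⟨B, hB, ⟨eqToIso (by norm_num)⟩⟩ f
  | succ n ih =>
      intro B hB f
      have e2 : B⟦(-1 : ℤ)⟧⟦-1 - (n : ℤ)⟧ ≅ B⟦-1 - ((n + 1 : ℕ) : ℤ)⟧ :=
        isoShiftShift B (-1) (-1 - (n : ℤ)) _ (by push_cast; ring)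
      have h1 := ih (B⟦(-1 : ℤ)⟧) (shift_minus_memG hV hB) (f ≫ e2.inv)
      have h2 : f = (f ≫ e2.inv) ≫ e2.hom := by simp
      rw [h2, h1, zero_comp]

lemma vanish {A B : D} {a b : ℤ} (hA : A ∈ shiftSet D L a) (hB : B ∈ shiftSet D G b)
    (hab : b < a) : ∀ f : A ⟶ B, f = 0 := by
  obtain ⟨A₀, hA₀, ⟨eA⟩⟩ := hA
  obtain ⟨B₀, hB₀, ⟨eB⟩⟩ := hB
  refine homZero_of_iso eA eB ?_
  refine homZero_of_iso (Iso.refl _) (isoShiftShift B₀ (b - a) a b (by ring)).symm ?_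
  exact homZero_shift (vanish0 hV hA₀ hB₀ (b - a) (by omega)) a

lemma trunc (n : ℤ) (A : D) :
    ∃ (X Y : D) (f : X ⟶ A) (g : A ⟶ Y) (h : Y ⟶ X⟦(1 : ℤ)⟧),
      Triangle.mk f g h ∈ (distTriang D) ∧ X ∈ shiftSet D L n ∧ Y ∈ shiftSet D G (n - 1) := by
  obtain ⟨X₀, Y₀, f₀, g₀, h₀, hX₀, hY₀, hT⟩ := hV.cover (A⟦-n⟧) (Set.mem_univ _)
  have hS : (Triangle.shiftFunctor D n).obj (Triangle.mk f₀ g₀ h₀) ∈ distTriang D :=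
    Triangle.shift_distinguished _ hT n
  set S := (Triangle.shiftFunctor D n).obj (Triangle.mk f₀ g₀ h₀) with hSdef
  have e : A⟦-n⟧⟦n⟧ ≅ A := isoShiftShift A (-n) n 0 (by ring) ≪≫ isoShiftZero A
  refine ⟨X₀⟦n⟧, Y₀⟦n⟧, S.mor₁ ≫ e.hom, e.inv ≫ S.mor₂, S.mor₃, ?_, mem_shiftSet hX₀, ?_⟩
  · refine isomorphic_distinguished _ hS _ ?_
    exact Triangle.isoMk _ _ (Iso.refl _) e.symm (Iso.refl _) (by simp [Triangle.mk, S, Triangle.shiftFunctor]) (by simp [Triangle.mk, S, Triangle.shiftFunctor]) (by simp [Triangle.mk, S, Triangle.shiftFunctor])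
  · obtain ⟨B, hB, ⟨e'⟩⟩ := hY₀
    exact ⟨B, hB, ⟨(shiftFunctor D n).mapIso e' ≪≫ isoShiftShift B (-1) n (n - 1) (by ring)⟩⟩

lemma memL_of_perp {A : D} (h : ∀ Y ∈ shiftSet D G (-1), ∀ f : A ⟶ Y, f = 0) : A ∈ L := by
  obtain ⟨X, Y, f, g, hh, hT, hX, hY⟩ := trunc hV 0 A
  have hY' : Y ∈ shiftSet D G (-1) := shiftSet_index_congr (by norm_num) hY
  have hg : g = 0 := h Y hY' g
  have hX1 : X⟦(1 : ℤ)⟧ ∈ shiftSet D L 1 := shiftSet_index_congr (by norm_num) (shift_mem_shiftSet 1 hX)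
  have hYzero : IsZero Y := by
    rw [IsZero.iff_id_eq_zero]
    obtain ⟨w, hw⟩ := Triangle.yoneda_exact₃ _ hT (𝟙 Y) (by exact (comp_id _).trans hg)
    rw [hw, vanish hV hX1 hY' (by omega) w]
    exact comp_zero
  have hiso : IsIso (Triangle.mk f g hh).mor₁ := (Triangle.isZero₃_iff_isIso₁ _ hT).1 hYzero
  obtain ⟨X₀, hX₀, ⟨e⟩⟩ := hX
  exact L_iso hV ((isoShiftZero X₀).symm ≪≫ e.symm ≪≫ @asIso _ _ _ _ (Triangle.mk f g hh).mor₁ hiso) hX₀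

lemma memGneg_of_perp {A : D} (h : ∀ X ∈ L, ∀ f : X ⟶ A, f = 0) :
    A ∈ shiftSet D G (-1) := by
  obtain ⟨X, Y, f, g, hh, hT, hX, hY⟩ := trunc hV 0 A
  have hY' : Y ∈ shiftSet D G (-1) := shiftSet_index_congr (by norm_num) hY
  have hXL : X ∈ L := by
    obtain ⟨X₀, hX₀, ⟨e⟩⟩ := hX
    exact L_iso hV ((isoShiftZero X₀).symm ≪≫ e.symm) hX₀
  have hf : f = 0 := h X hXL f
  have hXzero : IsZero X := by
    rw [IsZero.iff_id_eq_zero]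
    have hYm : Y⟦(-1 : ℤ)⟧ ∈ shiftSet D G (-2) :=
      shiftSet_index_congr (by norm_num) (shift_mem_shiftSet (-1) hY')
    exact vanish₁Cov hT (fun w => vanish hV (mem_shiftSet_zero hXL) hYm (by omega) w)
      (by exact (id_comp _).trans hf)
  have hiso : IsIso (Triangle.mk f g hh).mor₂ := (Triangle.isZero₁_iff_isIso₂ _ hT).1 hXzero
  exact shiftSet_isoClosed _ _ (asIso (Triangle.mk f g hh).mor₂).symm hY'

lemma extL {T : Triangle D} (hT : T ∈ distTriang D) (h₁ : T.obj₁ ∈ L) (h₃ : T.obj₃ ∈ L) :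
    T.obj₂ ∈ L :=
  memL_of_perp hV (fun Y hY => midVanishContra hT
    (fun g => hV.hom_zero _ h₁ _ hY g) (fun g => hV.hom_zero _ h₃ _ hY g))

lemma extGneg {T : Triangle D} (hT : T ∈ distTriang D) (h₁ : T.obj₁ ∈ shiftSet D G (-1))
    (h₃ : T.obj₃ ∈ shiftSet D G (-1)) : T.obj₂ ∈ shiftSet D G (-1) :=
  memGneg_of_perp hV (fun X hX => midVanishCov hT
    (fun g => hV.hom_zero _ hX _ h₁ g) (fun g => hV.hom_zero _ hX _ h₃ g))

lemma zero_memL {Z : D} (hZ : IsZero Z) : Z ∈ L :=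
  memL_of_perp hV (fun Y _ f => hZ.eq_of_src f 0)

lemma zero_memG {Z : D} (hZ : IsZero Z) : Z ∈ G :=
  hV.shiftG (memGneg_of_perp hV (fun X _ f => hZ.eq_of_tgt f 0))

lemma shift_tstructure (n : ℤ) : IsTStructure D (shiftSet D L n) (shiftSet D G n) := by
  constructor
  · exact Set.subset_univ _
  · exact Set.subset_univ _
  · exact fun A B e hA _ => shiftSet_isoClosed _ _ e hA
  · exact fun A B e hA _ => shiftSet_isoClosed _ _ e hA
  · intro A hA B hB f
    rw [shiftSet_shiftSet] at hB
    exact vanish hV hA hB (by omega) f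
  · intro A _
    obtain ⟨X, Y, f, g, h, hT, hX, hY⟩ := trunc hV n A
    rw [shiftSet_shiftSet]
    exact ⟨X, Y, f, g, h, hX, shiftSet_index_congr (by ring) hY, hT⟩
  · intro A hA
    rw [shiftSet_shiftSet]
    obtain ⟨C, hC, ⟨e⟩⟩ := hA
    exact ⟨C⟦(1 : ℤ)⟧, shift_plus_memL hV hC,
      ⟨e ≪≫ (isoShiftShift C 1 (n + -1) n (by ring)).symm⟩⟩
  · intro A hA
    rw [shiftSet_shiftSet] at hA
    exact G_mono hV (by omega) hA

end TStr

section TStr2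
set_option linter.unusedSectionVars false
set_option maxHeartbeats 1600000
variable {D}

noncomputable def isoCancelNegPos (A : D) : A⟦(-1 : ℤ)⟧⟦(1 : ℤ)⟧ ≅ A :=
  isoShiftShift A (-1) 1 0 (by ring) ≪≫ isoShiftZero A

noncomputable def isoCancelPosNeg (A : D) : A⟦(1 : ℤ)⟧⟦(-1 : ℤ)⟧ ≅ A :=
  isoShiftShift A 1 (-1) 0 (by ring) ≪≫ isoShiftZero A

variable {L G : Set D} (hV : IsTStructure D L G)
include hV

lemma of_shiftSetL_zero {A : D} (hA : A ∈ shiftSet D L 0) : A ∈ L := by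
  obtain ⟨C, hC, ⟨e⟩⟩ := hA
  exact L_iso hV (e ≪≫ isoShiftZero C).symm hC

lemma of_shiftSetG_zero {A : D} (hA : A ∈ shiftSet D G 0) : A ∈ G := by
  obtain ⟨C, hC, ⟨e⟩⟩ := hA
  exact G_iso hV (e ≪≫ isoShiftZero C).symm hC

lemma memG_of_shift_neg {A : D} (h : A⟦(-1 : ℤ)⟧ ∈ shiftSet D G (-1)) : A ∈ G := by
  obtain ⟨W, hW, ⟨e⟩⟩ := h
  have eWA : W ≅ A :=
    ((shiftFunctor D (1 : ℤ)).mapIso e ≪≫ isoCancelNegPos W).symm ≪≫ isoCancelNegPos A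
  exact G_iso hV eWA hW

lemma memGs_of_perp (n : ℤ) {A : D} (h : ∀ X ∈ shiftSet D L n, ∀ f : X ⟶ A, f = 0) :
    A ∈ shiftSet D G (n - 1) := by
  have h2 := memGneg_of_perp (shift_tstructure hV n) h
  rw [shiftSet_shiftSet] at h2
  exact shiftSet_index_congr (by ring) h2

lemma memLs_of_perp (n : ℤ) {A : D} (h : ∀ Y ∈ shiftSet D G (n - 1), ∀ f : A ⟶ Y, f = 0) :
    A ∈ shiftSet D L n := by
  apply memL_of_perp (shift_tstructure hV n)
  intro Y hY f
  rw [shiftSet_shiftSet] at hY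
  exact h Y (shiftSet_index_congr (by ring) hY) f

lemma extGs (n : ℤ) {T : Triangle D} (hT : T ∈ distTriang D)
    (h₁ : T.obj₁ ∈ shiftSet D G (n - 1)) (h₃ : T.obj₃ ∈ shiftSet D G (n - 1)) :
    T.obj₂ ∈ shiftSet D G (n - 1) :=
  memGs_of_perp hV n (fun X hX => midVanishCov hT
    (fun g => vanish hV hX h₁ (by omega) g) (fun g => vanish hV hX h₃ (by omega) g))

end TStr2

section P1
set_option linter.unusedSectionVars false
set_option maxHeartbeats 1600000
variable {D}
variable {L G : Set D} (hU : IsTStructure D L G) {m : ℤ} (hm : 1 ≤ m)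
include hU hm

lemma part1 (L' G' : Set D) (hV : IsTStructure D L' G')
    (h1 : shiftSet D L m ⊆ L') (h2 : L' ⊆ L) :
    IsSTorsionPairIn D (shiftSet D G (m - 1) ∩ L)
        (L' ∩ shiftSet D G (m - 1)) (shiftSet D G' (-1) ∩ L) ∧
      starSet D (shiftSet D L m) (L' ∩ shiftSet D G (m - 1)) = L' ∧
      starSet D (shiftSet D (shiftSet D G' (-1) ∩ L) 1) G = G' := by
  have hsubF : shiftSet D G' (-1) ⊆ shiftSet D G (m - 1) := fun Z hZ =>
    memGs_of_perp hU m (fun P hP f => hV.hom_zero P (h1 hP) Z hZ f)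
  have hGG' : G ⊆ G' := by
    intro Z hZ
    have h3 : Z⟦(-1 : ℤ)⟧ ∈ shiftSet D G' (-1) :=
      memGneg_of_perp hV (fun X hX f =>
        vanish hU (mem_shiftSet_zero (h2 hX)) (mem_shiftSet hZ) (by omega) f)
    obtain ⟨W, hW, ⟨e⟩⟩ := h3
    have eWZ : W ≅ Z :=
      ((shiftFunctor D (1 : ℤ)).mapIso e ≪≫ isoCancelNegPos W).symm ≪≫ isoCancelNegPos Z
    exact G_iso hV eWZ hW
  refine ⟨⟨⟨?_, ?_, ?_, ?_, ?_, ?_, ?_, ?_, ?_, ?_, ?_, ?_⟩, ?_⟩, ?_, ?_⟩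
  -- subT
  · exact fun A hA => ⟨hA.2, h2 hA.1⟩
  -- subF
  · exact fun A hA => ⟨hsubF hA.1, hA.2⟩
  -- isoT
  · exact fun A B e hA hB => ⟨hV.isoL e hA.1 trivial, hB.1⟩
  -- isoF
  · exact fun A B e hA hB => ⟨shiftSet_isoClosed _ _ e hA.1, hB.2⟩
  -- zeroT
  · exact fun Z hZ hZH => ⟨zero_memL hV hZ, hZH.1⟩
  -- zeroF
  · exact fun Z hZ hZH => ⟨memGneg_of_perp hV (fun X _ f => hZ.eq_of_tgt f 0), hZH.2⟩
  -- sumT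
  · intro A hA B hB
    refine ⟨memL_of_perp hV (fun Y hY f => ?_), memGs_of_perp hU m (fun P hP f => ?_)⟩
    · have e1 : biprod.inl ≫ f = 0 := hV.hom_zero _ hA.1 _ hY _
      have e2 : biprod.inr ≫ f = 0 := hV.hom_zero _ hB.1 _ hY _
      exact biprod.hom_ext' f 0 (by simp [e1]) (by simp [e2])
    · have e1 : f ≫ biprod.fst = 0 := vanish hU hP hA.2 (by omega) _
      have e2 : f ≫ biprod.snd = 0 := vanish hU hP hB.2 (by omega) _
      exact biprod.hom_ext f 0 (by simp [e1]) (by simp [e2])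
  -- sumF
  · intro A hA B hB
    refine ⟨memGneg_of_perp hV (fun X hX f => ?_), memL_of_perp hU (fun Y hY f => ?_)⟩
    · have e1 : f ≫ biprod.fst = 0 := hV.hom_zero _ hX _ hA.1 _
      have e2 : f ≫ biprod.snd = 0 := hV.hom_zero _ hX _ hB.1 _
      exact biprod.hom_ext f 0 (by simp [e1]) (by simp [e2])
    · have e1 : biprod.inl ≫ f = 0 := hU.hom_zero _ hA.2 _ hY _
      have e2 : biprod.inr ≫ f = 0 := hU.hom_zero _ hB.2 _ hY _
      exact biprod.hom_ext' f 0 (by simp [e1]) (by simp [e2])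
  -- summandT
  · intro A hA X i p hip hXH
    refine ⟨memL_of_perp hV (fun Y hY f => ?_), hXH.1⟩
    have h0 : p ≫ f = 0 := hV.hom_zero _ hA.1 _ hY _
    calc f = (i ≫ p) ≫ f := by rw [hip, id_comp]
    _ = i ≫ (p ≫ f) := by rw [assoc]
    _ = 0 := by rw [h0, comp_zero]
  -- summandF
  · intro A hA X i p hip hXH
    refine ⟨memGneg_of_perp hV (fun P hP f => ?_), hXH.2⟩
    have h0 : f ≫ i = 0 := hV.hom_zero _ hP _ hA.1 _
    calc f = f ≫ (i ≫ p) := by rw [hip, comp_id]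
    _ = (f ≫ i) ≫ p := by rw [assoc]
    _ = 0 := by rw [h0, zero_comp]
  -- hom_zero
  · exact fun A hA B hB f => hV.hom_zero _ hA.1 _ hB.1 f
  -- cover
  · intro A hAH
    obtain ⟨X, Y, f, g, h, hT, hX, hY⟩ := trunc hV 0 A
    have hY' : Y ∈ shiftSet D G' (-1) := shiftSet_index_congr (by norm_num) hY
    have hXL' : X ∈ L' := of_shiftSetL_zero hV hX
    have hXGm : X ∈ shiftSet D G (m - 1) := by
      refine memGs_of_perp hU m (fun P hP f0 => ?_)
      refine vanish₁Cov hT (fun g3 => ?_) ?_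
      · have hYm : Y⟦(-1 : ℤ)⟧ ∈ shiftSet D G' (-2) :=
          shiftSet_index_congr (by norm_num) (shift_mem_shiftSet (-1) hY')
        exact vanish hV (mem_shiftSet_zero (h1 hP)) hYm (by omega) g3
      · exact vanish hU hP hAH.1 (by omega) _
    have hYL : Y ∈ L := by
      refine memL_of_perp hU (fun Z hZ f0 => ?_)
      refine vanish₃Contra hT (fun w => ?_) ?_
      · have hX1 : X⟦(1 : ℤ)⟧ ∈ shiftSet D L 1 :=
          shiftSet_index_congr (by norm_num)
            (shift_mem_shiftSet 1 (mem_shiftSet_zero (h2 hXL')))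
        exact vanish hU hX1 hZ (by omega) w
      · exact hU.hom_zero _ hAH.2 _ hZ _
    exact ⟨X, Y, f, g, h, ⟨hXL', hXGm⟩, ⟨hY', hYL⟩, hT⟩
  -- neg_hom_zero
  · intro A hA B hB f
    have hBm : B⟦(-1 : ℤ)⟧ ∈ shiftSet D G' (-2) :=
      shiftSet_index_congr (by norm_num) (shift_mem_shiftSet (-1) hB.1)
    exact vanish hV (mem_shiftSet_zero hA.1) hBm (by omega) f
  -- ψ ∘ φ = id on aisles
  · ext A
    constructor
    · rintro ⟨P, Q, f, g, h, hP, hQ, hT⟩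
      exact memL_of_perp hV (fun Y hY => midVanishContra hT
        (fun w => hV.hom_zero _ (h1 hP) _ hY w) (fun w => hV.hom_zero _ hQ.1 _ hY w))
    · intro hA
      obtain ⟨X₁, Y₁, f, g, h, hT, hX₁, hY₁⟩ := trunc hU m A
      have hY₁L' : Y₁ ∈ L' := by
        refine memL_of_perp hV (fun Z hZ f0 => ?_)
        refine vanish₃Contra hT (fun w => ?_) ?_
        · have hX1s : X₁⟦(1 : ℤ)⟧ ∈ shiftSet D L m :=
            L_anti hU (by omega) (shift_mem_shiftSet 1 hX₁)
          exact hV.hom_zero _ (h1 hX1s) _ hZ w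
        · exact hV.hom_zero _ hA _ hZ _
      exact ⟨X₁, Y₁, f, g, h, hX₁, ⟨hY₁L', hY₁⟩, hT⟩
  -- ψ ∘ φ = id on co-aisles
  · ext B
    constructor
    · rintro ⟨P, Q, f, g, hh, hP, hQ, hT⟩
      have hT' := Triangle.shift_distinguished _ hT (-1)
      apply memG_of_shift_neg hV
      refine extGs hV 0 hT' ?_ ?_
      · -- P⟦-1⟧ ∈ shiftSet G' (0-1)
        obtain ⟨Z, hZ, ⟨eP⟩⟩ := hP
        obtain ⟨W, hW, ⟨eZ⟩⟩ := hZ.1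
        refine shiftSet_index_congr (by norm_num : (-1 : ℤ) = 0 - 1) ?_
        exact ⟨W, hW, ⟨(shiftFunctor D (-1 : ℤ)).mapIso eP ≪≫ isoCancelPosNeg Z ≪≫ eZ⟩⟩
      · refine shiftSet_index_congr (by norm_num : (-1 : ℤ) = 0 - 1) ?_
        exact mem_shiftSet (hGG' hQ)
    · intro hB
      obtain ⟨X', Y', f, g, h, hT, hX', hY'⟩ := trunc hU 1 B
      have hYG : Y' ∈ G :=
        of_shiftSetG_zero hU (shiftSet_index_congr (by norm_num) hY')
      have hZL : X'⟦(-1 : ℤ)⟧ ∈ L :=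
        of_shiftSetL_zero hU (shiftSet_index_congr (by norm_num)
          (shift_mem_shiftSet (-1) hX'))
      have hZG' : X'⟦(-1 : ℤ)⟧ ∈ shiftSet D G' (-1) := by
        refine memGneg_of_perp hV (fun P hP f0 => ?_)
        have hT' := Triangle.shift_distinguished _ hT (-1)
        refine vanish₁Cov hT' (fun g3 => ?_) ?_
        · have hYm : Y'⟦(-1 : ℤ)⟧⟦(-1 : ℤ)⟧ ∈ shiftSet D G (-2) := by
            refine shiftSet_index_congr (by norm_num) (shift_mem_shiftSet (-1)
              (shiftSet_index_congr (by norm_num : (1 : ℤ) - 1 + -1 = -1)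
                (shift_mem_shiftSet (-1) hY')))
          exact vanish hU (mem_shiftSet_zero (h2 hP)) hYm (by omega) g3
        · refine hV.hom_zero P hP _ (mem_shiftSet hB) _
      refine ⟨X', Y', f, g, h, ?_, hYG, hT⟩
      exact ⟨X'⟦(-1 : ℤ)⟧, ⟨hZG', hZL⟩, ⟨(isoCancelNegPos X').symm⟩⟩

end P1

/-- characterization of the aisle of `ψ(T,F)` by orthogonality -/
def Ac (G F : Set D) : Set D :=
  {W | (∀ Z ∈ shiftSet D G (-1), ∀ f : W ⟶ Z, f = 0) ∧ ∀ Z ∈ F, ∀ f : W ⟶ Z, f = 0}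

/-- characterization of the (shifted) coaisle of `ψ(T,F)` by orthogonality -/
def Bc (L T : Set D) (m : ℤ) : Set D :=
  {Z | (∀ P ∈ shiftSet D L m, ∀ f : P ⟶ Z, f = 0) ∧ (∀ P ∈ T, ∀ f : P ⟶ Z, f = 0) ∧
    ∀ P ∈ T, ∀ f : P ⟶ Z⟦(-1 : ℤ)⟧, f = 0}

section P2Defs
set_option linter.unusedSectionVars false
variable {D}

lemma homZero_of_iso_src {A A' B : D} (e : A ≅ A') (h : ∀ f : A' ⟶ B, f = 0) :
    ∀ f : A ⟶ B, f = 0 := homZero_of_iso e (Iso.refl _) h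

lemma homZero_of_iso_tgt {A B B' : D} (e : B ≅ B') (h : ∀ f : A ⟶ B', f = 0) :
    ∀ f : A ⟶ B, f = 0 := homZero_of_iso (Iso.refl _) e h

end P2Defs

section P2
set_option linter.unusedSectionVars false
set_option maxHeartbeats 1600000
open ZeroObject
variable {D}
variable {L G : Set D} (hU : IsTStructure D L G) {m : ℤ} (hm : 1 ≤ m) {T F : Set D}
  (hTF : IsSTorsionPairIn D (shiftSet D G (m - 1) ∩ L) T F)
include hU hm hTF

lemma T_sub_L : T ⊆ L := fun _ hA => (hTF.subT hA).2
lemma T_sub_Gm : T ⊆ shiftSet D G (m - 1) := fun _ hA => (hTF.subT hA).1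
lemma F_sub_L : F ⊆ L := fun _ hA => (hTF.subF hA).2
lemma F_sub_Gm : F ⊆ shiftSet D G (m - 1) := fun _ hA => (hTF.subF hA).1

lemma F_sub_Bc : F ⊆ Bc D L T m := by
  intro Z hZ
  refine ⟨fun P hP f => vanish hU hP (F_sub_Gm hU hm hTF hZ) (by omega) f,
    fun P hP f => hTF.hom_zero P hP Z hZ f,
    fun P hP f => hTF.neg_hom_zero P hP Z hZ f⟩

lemma Gneg_sub_Bc : shiftSet D G (-1) ⊆ Bc D L T m := by
  intro Z hZ
  have hZ2 : Z⟦(-1 : ℤ)⟧ ∈ shiftSet D G (-2) :=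
    shiftSet_index_congr (by norm_num) (shift_mem_shiftSet (-1) hZ)
  exact ⟨fun P hP f => vanish hU hP hZ (by omega) f,
    fun P hP f => vanish hU (mem_shiftSet_zero (T_sub_L hU hm hTF hP)) hZ (by omega) f,
    fun P hP f => vanish hU (mem_shiftSet_zero (T_sub_L hU hm hTF hP)) hZ2 (by omega) f⟩

lemma shLm_sub_Ac : shiftSet D L m ⊆ Ac D G F := by
  intro W hW
  exact ⟨fun Z hZ f => vanish hU hW hZ (by omega) f,
    fun Z hZ f => vanish hU hW (F_sub_Gm hU hm hTF hZ) (by omega) f⟩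

lemma T_sub_Ac : T ⊆ Ac D G F := by
  intro W hW
  exact ⟨fun Z hZ f => vanish hU (mem_shiftSet_zero (T_sub_L hU hm hTF hW)) hZ (by omega) f,
    fun Z hZ f => hTF.hom_zero W hW Z hZ f⟩

lemma Bc_iso : isoClosed D (Bc D L T m) := by
  rintro A B e ⟨h1, h2, h3⟩
  exact ⟨fun P hP => homZero_of_iso_tgt e.symm (h1 P hP),
    fun P hP => homZero_of_iso_tgt e.symm (h2 P hP),
    fun P hP => homZero_of_iso_tgt ((shiftFunctor D (-1 : ℤ)).mapIso e.symm) (h3 P hP)⟩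

lemma Ac_iso : isoClosed D (Ac D G F) := by
  rintro A B e ⟨h1, h2⟩
  exact ⟨fun P hP => homZero_of_iso_src e.symm (h1 P hP),
    fun P hP => homZero_of_iso_src e.symm (h2 P hP)⟩

lemma Bc_ext {T' : Triangle D} (hT : T' ∈ distTriang D) (h₁ : T'.obj₁ ∈ Bc D L T m)
    (h₃ : T'.obj₃ ∈ Bc D L T m) : T'.obj₂ ∈ Bc D L T m := by
  refine ⟨fun P hP => midVanishCov hT (h₁.1 P hP) (h₃.1 P hP),
    fun P hP => midVanishCov hT (h₁.2.1 P hP) (h₃.2.1 P hP),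
    fun P hP => midVanishCov (Triangle.shift_distinguished _ hT (-1))
      (h₁.2.2 P hP) (h₃.2.2 P hP)⟩

lemma Ac_ext {T' : Triangle D} (hT : T' ∈ distTriang D) (h₁ : T'.obj₁ ∈ Ac D G F)
    (h₃ : T'.obj₃ ∈ Ac D G F) : T'.obj₂ ∈ Ac D G F :=
  ⟨fun Z hZ => midVanishContra hT (h₁.1 Z hZ) (h₃.1 Z hZ),
   fun Z hZ => midVanishContra hT (h₁.2 Z hZ) (h₃.2 Z hZ)⟩

/-- the core construction: objects right-orthogonal to `U^{≤-m}` and `T`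
admit a triangle `F → Z → U^{≥1}`. -/
lemma coreB {Z : D} (h1 : ∀ P ∈ shiftSet D L m, ∀ f : P ⟶ Z, f = 0)
    (h2 : ∀ P ∈ T, ∀ f : P ⟶ Z, f = 0) :
    ∃ (X Y : D) (f : X ⟶ Z) (g : Z ⟶ Y) (h : Y ⟶ X⟦(1 : ℤ)⟧),
      Triangle.mk f g h ∈ (distTriang D) ∧ X ∈ F ∧ Y ∈ shiftSet D G (-1) := by
  obtain ⟨X, Y, f, g, h, hT, hX, hY⟩ := trunc hU 0 Z
  have hY' : Y ∈ shiftSet D G (-1) := shiftSet_index_congr (by norm_num) hY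
  have hYm : Y⟦(-1 : ℤ)⟧ ∈ shiftSet D G (-2) :=
    shiftSet_index_congr (by norm_num) (shift_mem_shiftSet (-1) hY')
  have hXL : X ∈ L := of_shiftSetL_zero hU hX
  have hXGm : X ∈ shiftSet D G (m - 1) :=
    memGs_of_perp hU m (fun P hP f0 =>
      vanish₁Cov hT (fun g3 => vanish hU hP hYm (by omega) g3) (h1 P hP _))
  obtain ⟨T', F', t, s, e, hT', hF', hTor⟩ := hTF.cover X ⟨hXGm, hXL⟩
  have ht0 : t = 0 :=
    vanish₁Cov hT (fun g3 =>
      vanish hU (mem_shiftSet_zero (T_sub_L hU hm hTF hT')) hYm (by omega) g3)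
      (h2 T' hT' _)
  obtain ⟨p, hp⟩ := Triangle.yoneda_exact₂ _ hTor (𝟙 X) (by exact (comp_id _).trans ht0)
  have hXF : X ∈ F := hTF.summandF F' hF' X s p hp.symm ⟨hXGm, hXL⟩
  exact ⟨X, Y, f, g, h, hT, hXF, hY'⟩

lemma Bc_to_star {Z : D} (hZ : Z ∈ Bc D L T m) :
    ∃ (X Y : D) (f : X ⟶ Z) (g : Z ⟶ Y) (h : Y ⟶ X⟦(1 : ℤ)⟧),
      Triangle.mk f g h ∈ (distTriang D) ∧ X ∈ F ∧ Y ∈ shiftSet D G (-1) :=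
  coreB hU hm hTF hZ.1 hZ.2.1

lemma F_shift_star {B : D} (hB : B ∈ F) :
    ∃ (X Y : D) (f : X ⟶ B⟦(-1 : ℤ)⟧) (g : B⟦(-1 : ℤ)⟧ ⟶ Y) (h : Y ⟶ X⟦(1 : ℤ)⟧),
      Triangle.mk f g h ∈ (distTriang D) ∧ X ∈ F ∧ Y ∈ shiftSet D G (-1) := by
  refine coreB hU hm hTF (fun P hP f => ?_) (fun P hP f => hTF.neg_hom_zero P hP B hB f)
  have hBm : B⟦(-1 : ℤ)⟧ ∈ shiftSet D G (m - 2) :=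
    shiftSet_index_congr (by ring) (shift_mem_shiftSet (-1) (F_sub_Gm hU hm hTF hB))
  exact vanish hU hP hBm (by omega) f

lemma T_neg2_vanish {P B : D} (hP : P ∈ T) (hB : B ∈ F) :
    ∀ f : P ⟶ B⟦(-1 : ℤ)⟧⟦(-1 : ℤ)⟧, f = 0 := by
  obtain ⟨X, Y, f, g, h, hT, hX, hY⟩ := F_shift_star hU hm hTF hB
  have hYm : Y⟦(-1 : ℤ)⟧ ∈ shiftSet D G (-2) :=
    shiftSet_index_congr (by norm_num) (shift_mem_shiftSet (-1) hY)
  exact midVanishCov (Triangle.shift_distinguished _ hT (-1))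
    (fun g3 => hTF.neg_hom_zero P hP X hX g3)
    (fun g3 => vanish hU (mem_shiftSet_zero (T_sub_L hU hm hTF hP)) hYm (by omega) g3)

lemma Bc_shift {Z : D} (hZ : Z ∈ Bc D L T m) : Z⟦(-1 : ℤ)⟧ ∈ Bc D L T m := by
  obtain ⟨X, Y, f, g, h, hT, hX, hY⟩ := Bc_to_star hU hm hTF hZ
  have hYm : Y⟦(-1 : ℤ)⟧ ∈ shiftSet D G (-2) :=
    shiftSet_index_congr (by norm_num) (shift_mem_shiftSet (-1) hY)
  have hYmm : Y⟦(-1 : ℤ)⟧⟦(-1 : ℤ)⟧ ∈ shiftSet D G (-3) :=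
    shiftSet_index_congr (by norm_num) (shift_mem_shiftSet (-1) hYm)
  have hXm : X⟦(-1 : ℤ)⟧ ∈ shiftSet D G (m - 2) :=
    shiftSet_index_congr (by ring) (shift_mem_shiftSet (-1) (F_sub_Gm hU hm hTF hX))
  refine Bc_ext hU hm hTF (Triangle.shift_distinguished _ hT (-1)) ?_ ?_
  · exact ⟨fun P hP f0 => vanish hU hP hXm (by omega) f0,
      fun P hP f0 => hTF.neg_hom_zero P hP X hX f0,
      fun P hP f0 => T_neg2_vanish hU hm hTF hP hX f0⟩
  · exact ⟨fun P hP f0 => vanish hU hP hYm (by omega) f0,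
      fun P hP f0 => vanish hU (mem_shiftSet_zero (T_sub_L hU hm hTF hP)) hYm (by omega) f0,
      fun P hP f0 => vanish hU (mem_shiftSet_zero (T_sub_L hU hm hTF hP)) hYmm (by omega) f0⟩

lemma star_hom_Bc {W Z : D} (hW : W ∈ starSet D (shiftSet D L m) T) (hZ : Z ∈ Bc D L T m) :
    ∀ f : W ⟶ Z, f = 0 := by
  obtain ⟨P, Q, f, g, h, hP, hQ, hT⟩ := hW
  exact midVanishContra hT (hZ.1 P hP) (hZ.2.1 Q hQ)

lemma Ac_to_star {W : D} (hW : W ∈ Ac D G F) :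
    ∃ (X₁ W₂ : D) (f : X₁ ⟶ W) (g : W ⟶ W₂) (h : W₂ ⟶ X₁⟦(1 : ℤ)⟧),
      Triangle.mk f g h ∈ (distTriang D) ∧ X₁ ∈ shiftSet D L m ∧ W₂ ∈ T := by
  have hWL : W ∈ L := memL_of_perp hU hW.1
  obtain ⟨X₁, W₂, p, q, r, hTr, hX₁, hX₂⟩ := trunc hU m W
  have hX₁L : X₁ ∈ L := of_shiftSetL_zero hU (L_anti hU (by omega) hX₁)
  have hW₂L : W₂ ∈ L :=
    extL hU (rot_of_distTriang _ hTr) hWL (shift_plus_memL hU hX₁L)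
  obtain ⟨T', F', t, s, e, hT', hF', hTor⟩ := hTF.cover W₂ ⟨hX₂, hW₂L⟩
  have hs0 : s = 0 := by
    refine vanish₃Contra hTr (fun w => ?_) (hW.2 F' hF' _)
    exact vanish hU (shift_mem_shiftSet 1 hX₁) (F_sub_Gm hU hm hTF hF') (by omega) w
  obtain ⟨p₂, hp₂⟩ := Triangle.coyoneda_exact₂ _ hTor (𝟙 W₂) (by exact (id_comp _).trans hs0)
  have hW₂T : W₂ ∈ T := hTF.summandT T' hT' W₂ p₂ t hp₂.symm ⟨hX₂, hW₂L⟩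
  exact ⟨X₁, W₂, p, q, r, hTr, hX₁, hW₂T⟩

lemma T1_sub_Ac {P : D} (hP : P ∈ T) : P⟦(1 : ℤ)⟧ ∈ Ac D G F := by
  constructor
  · intro Z hZ f
    exact vanish hU (shift_mem_shiftSet 1 (mem_shiftSet_zero (T_sub_L hU hm hTF hP)))
      hZ (by omega) f
  · intro Z hZ f
    exact homZero_up (hTF.neg_hom_zero P hP Z hZ) f

lemma Ac_shift {W : D} (hW : W ∈ Ac D G F) : W⟦(1 : ℤ)⟧ ∈ Ac D G F := by
  obtain ⟨X₁, W₂, f, g, h, hT, hX₁, hW₂⟩ := Ac_to_star hU hm hTF hW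
  refine Ac_ext hU hm hTF (Triangle.shift_distinguished _ hT 1) ?_ ?_
  · exact shLm_sub_Ac hU hm hTF (L_anti hU (by omega) (shift_mem_shiftSet 1 hX₁))
  · exact T1_sub_Ac hU hm hTF hW₂

lemma coverL {X : D} (hX : X ∈ L) :
    ∃ (K F' : D) (u : K ⟶ X) (v : X ⟶ F') (δ : F' ⟶ K⟦(1 : ℤ)⟧),
      Triangle.mk u v δ ∈ (distTriang D) ∧ F' ∈ F ∧
        ∀ Z ∈ Bc D L T m, ∀ ξ : K ⟶ Z, ξ = 0 := by
  obtain ⟨X₁, X₂, p, q, r, hTr, hX₁, hX₂⟩ := trunc hU m X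
  have hX₁L : X₁ ∈ L := of_shiftSetL_zero hU (L_anti hU (by omega) hX₁)
  have hX₂L : X₂ ∈ L := extL hU (rot_of_distTriang _ hTr) hX (shift_plus_memL hU hX₁L)
  obtain ⟨T', F', t, s, e, hT', hF', hTor⟩ := hTF.cover X₂ ⟨hX₂, hX₂L⟩
  obtain ⟨K, u, δ, hK⟩ := distinguished_cocone_triangle₁ (q ≫ s)
  refine ⟨K, F', u, q ≫ s, δ, hK, hF', ?_⟩
  intro Z hZ ξ
  have hvδ : (q ≫ s) ≫ δ = 0 := comp_distTriang_mor_zero₂₃ _ hK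
  let ι : K⟦(1 : ℤ)⟧⟦(-1 : ℤ)⟧ ⟶ K := (shiftEquiv D (1 : ℤ)).unitIso.inv.app K
  have step1 : s⟦(-1 : ℤ)⟧' ≫ δ⟦(-1 : ℤ)⟧' ≫ ι ≫ ξ = 0 := by
    refine vanish₃Contra (Triangle.shift_distinguished _ hTr (-1))
      (homZero_of_iso_src (isoCancelNegPos X₁) (hZ.1 X₁ hX₁)) ?_
    dsimp [Triangle.shiftFunctor, Triangle.mk]
    rw [Linear.units_smul_comp]
    have : q⟦(-1 : ℤ)⟧' ≫ s⟦(-1 : ℤ)⟧' ≫ δ⟦(-1 : ℤ)⟧' ≫ ι ≫ ξ = 0 := by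
      rw [← Functor.map_comp_assoc, ← Functor.map_comp_assoc, hvδ, Functor.map_zero, zero_comp]
    rw [this, smul_zero]
    rfl
  have step2 : δ⟦(-1 : ℤ)⟧' ≫ ι ≫ ξ = 0 := by
    refine vanish₃Contra (Triangle.shift_distinguished _ hTor (-1))
      (homZero_of_iso_src (isoCancelNegPos T') (hZ.2.1 T' hT')) ?_
    dsimp [Triangle.shiftFunctor, Triangle.mk]
    rw [Linear.units_smul_comp, step1, smul_zero]
    rfl
  have hlam : (Triangle.mk u (q ≫ s) δ).invRotate.mor₁ ≫ ξ = 0 := by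
    dsimp [Triangle.invRotate, Triangle.mk]
    rw [Preadditive.neg_comp]
    exact neg_eq_zero.mpr ((assoc _ _ _).trans step2)
  obtain ⟨ζ, hζ⟩ := Triangle.yoneda_exact₂ _ (inv_rot_of_distTriang _ hK) ξ hlam
  obtain ⟨y, hy⟩ := Triangle.yoneda_exact₂ _ hTr ζ (hZ.1 X₁ hX₁ _)
  obtain ⟨w, hw⟩ := Triangle.yoneda_exact₂ _ hTor y (hZ.2.1 T' hT' _)
  have hmor : (Triangle.mk u (q ≫ s) δ).invRotate.mor₂ = u := rfl
  rw [hζ, hmor, hy, hw]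
  have h12 : u ≫ (q ≫ s) = 0 := comp_distTriang_mor_zero₁₂ _ hK
  calc u ≫ q ≫ s ≫ w = (u ≫ (q ≫ s)) ≫ w := by exact (congrArg (u ≫ ·) (assoc q s w).symm).trans (assoc u (q ≫ s) w).symm
  _ = 0 := by rw [h12]; exact zero_comp

lemma coverD (A : D) :
    ∃ (K C : D) (β : K ⟶ A) (γ : A ⟶ C) (δ₂ : C ⟶ K⟦(1 : ℤ)⟧),
      Triangle.mk β γ δ₂ ∈ (distTriang D) ∧ K ∈ Ac D G F ∧ C ∈ Bc D L T m := by
  obtain ⟨X, Y, f, g, h, hTA, hXsh, hYsh⟩ := trunc hU 0 A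
  have hXL : X ∈ L := of_shiftSetL_zero hU hXsh
  have hY : Y ∈ shiftSet D G (-1) := shiftSet_index_congr (by norm_num) hYsh
  obtain ⟨K, F', u, v, δ, hK, hF', hKperp⟩ := coverL hU hm hTF hXL
  obtain ⟨C, γ, δ₂, hTC⟩ := distinguished_cocone_triangle (u ≫ f)
  have hKAc : K ∈ Ac D G F :=
    ⟨fun Z hZ => hKperp Z (Gneg_sub_Bc hU hm hTF hZ),
     fun Z hZ => hKperp Z (F_sub_Bc hU hm hTF hZ)⟩
  refine ⟨K, C, u ≫ f, γ, δ₂, hTC, hKAc, ?_⟩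
  have main : ∀ P ∈ Ac D G F, ∀ c : P ⟶ C, c = 0 := by
    intro P hP c
    have hδβ : δ₂ ≫ (u ≫ f)⟦(1 : ℤ)⟧' = 0 := comp_distTriang_mor_zero₃₁ _ hTC
    have h1 : (c ≫ δ₂) ≫ u⟦(1 : ℤ)⟧' = 0 := by
      refine vanish₁Cov (Triangle.shift_distinguished _ hTA 1)
        (homZero_of_iso_tgt (isoCancelPosNeg Y) (hP.1 Y hY)) ?_
      dsimp [Triangle.shiftFunctor, Triangle.mk]
      rw [Linear.comp_units_smul]
      have e0 : ((c ≫ δ₂) ≫ u⟦(1 : ℤ)⟧') ≫ f⟦(1 : ℤ)⟧' = 0 := by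
        simp only [assoc, ← Functor.map_comp]
        rw [hδβ, comp_zero]
      rw [e0, smul_zero]
      rfl
    have hd : c ≫ δ₂ = 0 := by
      refine vanish₁Cov (Triangle.shift_distinguished _ hK 1)
        (homZero_of_iso_tgt (isoCancelPosNeg F') (hP.2 F' hF')) ?_
      dsimp [Triangle.shiftFunctor, Triangle.mk]
      rw [Linear.comp_units_smul, h1, smul_zero]
      rfl
    obtain ⟨a, ha⟩ := Triangle.coyoneda_exact₃ _ hTC c hd
    obtain ⟨x, hx⟩ := Triangle.coyoneda_exact₂ _ hTA a (hP.1 Y hY _)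
    obtain ⟨k, hk⟩ := Triangle.coyoneda_exact₂ _ hK x (hP.2 F' hF' _)
    rw [ha, hx, hk]
    have h12 : (u ≫ f) ≫ γ = 0 := comp_distTriang_mor_zero₁₂ _ hTC
    calc ((k ≫ u) ≫ f) ≫ γ = k ≫ ((u ≫ f) ≫ γ) := by exact (assoc (k ≫ u) f γ).trans ((assoc k u (f ≫ γ)).trans (congrArg (fun x => k ≫ x) (assoc u f γ).symm))
    _ = 0 := by exact (congrArg (fun x => k ≫ x) h12).trans comp_zero
  refine ⟨fun P hP f0 => main P (shLm_sub_Ac hU hm hTF hP) f0,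
    fun P hP f0 => main P (T_sub_Ac hU hm hTF hP) f0,
    fun P hP f0 => homZero_down (main (P⟦(1 : ℤ)⟧) (T1_sub_Ac hU hm hTF hP)) f0⟩

lemma Ac_sub_star : Ac D G F ⊆ starSet D (shiftSet D L m) T := by
  intro W hW
  obtain ⟨X₁, W₂, f, g, h, hT, hX₁, hW₂⟩ := Ac_to_star hU hm hTF hW
  exact ⟨X₁, W₂, f, g, h, hX₁, hW₂, hT⟩

lemma star_sub_Ac : starSet D (shiftSet D L m) T ⊆ Ac D G F := by
  rintro W ⟨P, Q, f, g, h, hP, hQ, hT⟩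
  exact Ac_ext hU hm hTF hT (shLm_sub_Ac hU hm hTF hP) (T_sub_Ac hU hm hTF hQ)

lemma star_of_Bc_shift {Z : D} (h : Z⟦(-1 : ℤ)⟧ ∈ Bc D L T m) :
    Z ∈ starSet D (shiftSet D F 1) G := by
  obtain ⟨X, Y, f, g, hh, hT, hX, hY⟩ := Bc_to_star hU hm hTF h
  have hS := Triangle.shift_distinguished _ hT 1
  set S := (Triangle.shiftFunctor D 1).obj (Triangle.mk f g hh) with hSdef
  have hmem : Z⟦(-1 : ℤ)⟧⟦(1 : ℤ)⟧ ∈ starSet D (shiftSet D F 1) G := by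
    refine ⟨X⟦(1 : ℤ)⟧, Y⟦(1 : ℤ)⟧, S.mor₁, S.mor₂, S.mor₃, mem_shiftSet hX, ?_, hS⟩
    obtain ⟨B, hB, ⟨e⟩⟩ := hY
    exact G_iso hU (((shiftFunctor D (1 : ℤ)).mapIso e ≪≫ isoCancelNegPos B).symm) hB
  exact starSet_isoClosed _ _ (isoCancelNegPos Z) hmem

lemma Bc_sub_starshift : Bc D L T m ⊆ shiftSet D (starSet D (shiftSet D F 1) G) (-1) := by
  intro Z hZ
  refine ⟨Z⟦(1 : ℤ)⟧, ?_, ⟨(isoCancelPosNeg Z).symm⟩⟩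
  exact star_of_Bc_shift hU hm hTF (Bc_iso hU hm hTF (isoCancelPosNeg Z).symm hZ)

lemma starshift_sub_Bc : shiftSet D (starSet D (shiftSet D F 1) G) (-1) ⊆ Bc D L T m := by
  rintro Z ⟨Z₀, ⟨P₁, P₃, f, g, h, hP₁, hP₃, hT⟩, ⟨e⟩⟩
  refine Bc_iso hU hm hTF ?_ ?_ (A := Z₀⟦(-1 : ℤ)⟧)
  · exact e.symm
  refine Bc_ext hU hm hTF (Triangle.shift_distinguished _ hT (-1)) ?_ ?_
  · obtain ⟨Q, hQ, ⟨eP⟩⟩ := hP₁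
    refine Bc_iso hU hm hTF (B := P₁⟦(-1 : ℤ)⟧) ?_ (F_sub_Bc hU hm hTF hQ)
    exact ((shiftFunctor D (-1 : ℤ)).mapIso eP ≪≫ isoCancelPosNeg Q).symm
  · exact Gneg_sub_Bc hU hm hTF (mem_shiftSet hP₃)

end P2

section Final
set_option linter.unusedSectionVars false
set_option maxHeartbeats 1600000
open ZeroObject
variable {D}
variable {L G : Set D} (hU : IsTStructure D L G) {m : ℤ} (hm : 1 ≤ m) {T F : Set D}
  (hTF : IsSTorsionPairIn D (shiftSet D G (m - 1) ∩ L) T F)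
include hU hm hTF

lemma zero_mem_H : (0 : D) ∈ shiftSet D G (m - 1) ∩ L := by
  refine ⟨⟨0, zero_memG hU (isZero_zero D), ⟨?_⟩⟩, zero_memL hU (isZero_zero D)⟩
  exact (((shiftFunctor D (m - 1)).map_isZero (isZero_zero D)).isoZero).symm

lemma part2 :
    IsTStructure D (starSet D (shiftSet D L m) T) (starSet D (shiftSet D F 1) G) ∧
      shiftSet D L m ⊆ starSet D (shiftSet D L m) T ∧
      starSet D (shiftSet D L m) T ⊆ L ∧
      starSet D (shiftSet D L m) T ∩ shiftSet D G (m - 1) = T ∧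
      shiftSet D (starSet D (shiftSet D F 1) G) (-1) ∩ L = F := by
  have h0H : (0 : D) ∈ shiftSet D G (m - 1) ∩ L := zero_mem_H hU hm hTF
  refine ⟨⟨?_, ?_, ?_, ?_, ?_, ?_, ?_, ?_⟩, ?_, ?_, ?_, ?_⟩
  · exact Set.subset_univ _
  · exact Set.subset_univ _
  · exact fun A B e hA _ => starSet_isoClosed _ _ e hA
  · exact fun A B e hA _ => starSet_isoClosed _ _ e hA
  · intro A hA B hB f
    exact star_hom_Bc hU hm hTF hA (starshift_sub_Bc hU hm hTF hB) f
  · intro A _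
    obtain ⟨K, C, β, γ, δ₂, hTC, hK, hC⟩ := coverD hU hm hTF A
    exact ⟨K, C, β, γ, δ₂, Ac_sub_star hU hm hTF hK, Bc_sub_starshift hU hm hTF hC, hTC⟩
  · intro W hW
    exact ⟨W⟦(1 : ℤ)⟧,
      Ac_sub_star hU hm hTF (Ac_shift hU hm hTF (star_sub_Ac hU hm hTF hW)),
      ⟨(isoCancelPosNeg W).symm⟩⟩
  · intro Z hZ
    exact star_of_Bc_shift hU hm hTF (Bc_shift hU hm hTF (starshift_sub_Bc hU hm hTF hZ))
  · intro W hW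
    exact ⟨W, 0, 𝟙 W, 0, 0, hW, hTF.zeroT 0 (isZero_zero D) h0H,
      contractible_distinguished W⟩
  · exact fun W hW => memL_of_perp hU (star_sub_Ac hU hm hTF hW).1
  · ext W
    constructor
    · rintro ⟨hWs, hWG⟩
      obtain ⟨X₁, W₂, i, j, hh, hT, hX₁, hW₂⟩ :=
        Ac_to_star hU hm hTF (star_sub_Ac hU hm hTF hWs)
      have hi : i = 0 := vanish hU hX₁ hWG (by omega) i
      obtain ⟨pp, hpp⟩ := Triangle.yoneda_exact₂ _ hT (𝟙 W) (by exact (comp_id _).trans hi)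
      exact hTF.summandT W₂ hW₂ W j pp hpp.symm
        ⟨hWG, memL_of_perp hU (star_sub_Ac hU hm hTF hWs).1⟩
    · intro hWT
      refine ⟨⟨0, W, 0, 𝟙 W, 0, ?_, hWT, contractible_distinguished₁ W⟩,
        T_sub_Gm hU hm hTF hWT⟩
      exact ⟨0, zero_memL hU (isZero_zero D),
        ⟨(((shiftFunctor D m).map_isZero (isZero_zero D)).isoZero).symm⟩⟩
  · ext Z
    constructor
    · rintro ⟨hZs, hZL⟩
      have hZBc := starshift_sub_Bc hU hm hTF hZs
      obtain ⟨X, Y, a, b, hh, hT, hXF, hY⟩ := Bc_to_star hU hm hTF hZBc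
      have hb : b = 0 := hU.hom_zero Z hZL Y hY b
      obtain ⟨pp, hpp⟩ := Triangle.coyoneda_exact₂ _ hT (𝟙 Z) (by exact (id_comp _).trans hb)
      refine hTF.summandF X hXF Z pp a hpp.symm ⟨?_, hZL⟩
      exact memGs_of_perp hU m hZBc.1
    · intro hZF
      exact ⟨Bc_sub_starshift hU hm hTF (F_sub_Bc hU hm hTF hZF), F_sub_L hU hm hTF hZF⟩

end Final

/-- Proposition 4.1: for a `t`-structure `𝒰 = (L, G)` on `D` and
`m ≥ 1`, with `m`-extended heart `m-ℋ = U^{≥-(m-1)} ∩ U^{≤0} = G[m-1] ∩ L`, the maps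
`φ(V^{≤0},V^{≥0}) = (V^{≤0} ∩ U^{≥-(m-1)}, V^{≥1} ∩ U^{≤0})` and
`ψ(𝒯,ℱ) = (U^{≤-m} * 𝒯, ℱ[1] * U^{≥0})` are mutually inverse, order preserving
bijections between `t`-structures on `D` with `U^{≤-m} ⊆ V^{≤0} ⊆ U^{≤0}` and
`s`-torsion pairs in `m-ℋ`. -/
theorem stmt7 (L G : Set D) (hU : IsTStructure D L G) (m : ℤ) (hm : 1 ≤ m)
    (H : Set D) (hH : H = shiftSet D G (m - 1) ∩ L) :
    -- φ is well defined and ψ ∘ φ = id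
    (∀ L' G', IsTStructure D L' G' → shiftSet D L m ⊆ L' → L' ⊆ L →
       IsSTorsionPairIn D H (L' ∩ shiftSet D G (m - 1)) (shiftSet D G' (-1) ∩ L) ∧
       starSet D (shiftSet D L m) (L' ∩ shiftSet D G (m - 1)) = L' ∧
       starSet D (shiftSet D (shiftSet D G' (-1) ∩ L) 1) G = G') ∧
    -- ψ is well defined and φ ∘ ψ = id
    (∀ T F, IsSTorsionPairIn D H T F →
       IsTStructure D (starSet D (shiftSet D L m) T) (starSet D (shiftSet D F 1) G) ∧
       shiftSet D L m ⊆ starSet D (shiftSet D L m) T ∧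
       starSet D (shiftSet D L m) T ⊆ L ∧
       starSet D (shiftSet D L m) T ∩ shiftSet D G (m - 1) = T ∧
       shiftSet D (starSet D (shiftSet D F 1) G) (-1) ∩ L = F) ∧
    -- φ preserves the orders (inclusion of aisles to inclusion of torsion classes)
    (∀ L' G' L'' G'', IsTStructure D L' G' → IsTStructure D L'' G'' →
       shiftSet D L m ⊆ L' → L' ⊆ L → shiftSet D L m ⊆ L'' → L'' ⊆ L → L' ⊆ L'' →
       L' ∩ shiftSet D G (m - 1) ⊆ L'' ∩ shiftSet D G (m - 1)) ∧
    -- ψ preserves the orders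
    (∀ T F T' F', IsSTorsionPairIn D H T F → IsSTorsionPairIn D H T' F' → T ⊆ T' →
       starSet D (shiftSet D L m) T ⊆ starSet D (shiftSet D L m) T') := by
  subst hH
  refine ⟨?_, ?_, ?_, ?_⟩
  · intro L' G' hV h1 h2
    exact part1 hU hm L' G' hV h1 h2
  · intro T F hTF
    exact part2 hU hm hTF
  · intro L' G' L'' G'' _ _ _ _ _ _ h
    exact fun A hA => ⟨h hA.1, hA.2⟩
  · rintro T F T' F' _ _ hTT' A ⟨P, Q, f, g, h, hP, hQ, hT⟩
    exact ⟨P, Q, f, g, h, hP, hTT' hQ, hT⟩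
end

section
/- Let D be a triangulated category, m a positive integer, and let ℰ1, ℰ2 be m-extended hearts on D such that ℰ1 ≤ ℰ2 and ℰ2 ≤ ℰ1 (i.e. ℰ1 ⊆ ℰ2[m] * ℰ2, ℰ2 ⊆ ℰ1 * ℰ1[-m], ℰ2 ⊆ ℰ1[m] * ℰ1 and ℰ1 ⊆ ℰ2 * ℰ2[-m]). Then ℰ1 = ℰ2. -/
open CategoryTheory Category Limits Pretriangulated

universe v u

variable (D : Type u) [Category.{v} D] [Preadditive D] [HasZeroObject D]
  [HasShift D ℤ] [∀ n : ℤ, (shiftFunctor D n).Additive]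
  [Pretriangulated D] [HasBinaryBiproducts D]

section Aux

variable {D}

lemma shiftSet_iso {S : Set D} {n : ℤ} {A B : D} (e : A ≅ B) (hB : B ∈ shiftSet D S n) :
    A ∈ shiftSet D S n := by
  obtain ⟨C, hC, ⟨e'⟩⟩ := hB
  exact ⟨C, hC, ⟨e ≪≫ e'⟩⟩

lemma aux_mem_L_shift_one {L G : Set D} (ht : IsTStructure D L G) {X : D} (hX : X ∈ L) :
    X⟦(1 : ℤ)⟧ ∈ L := by
  have h : IsTStructureOn D Set.univ L G := ht
  obtain ⟨Y, hY, ⟨e⟩⟩ := h.shiftL hX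
  exact h.isoL ((shiftNegShift Y (1 : ℤ)).symm ≪≫
    (shiftFunctor D (1 : ℤ)).mapIso e.symm) hY trivial

lemma aux_mem_L_shift_nat {L G : Set D} (ht : IsTStructure D L G) {X : D} (hX : X ∈ L)
    (k : ℕ) : X⟦(k : ℤ)⟧ ∈ L := by
  have h : IsTStructureOn D Set.univ L G := ht
  induction k with
  | zero =>
    simp only [Nat.cast_zero]
    exact h.isoL ((shiftFunctorZero D ℤ).app X).symm hX trivial
  | succ k ih =>
    exact h.isoL ((shiftFunctorAdd' D (k : ℤ) 1 ((k + 1 : ℕ) : ℤ)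
      (by push_cast; ring)).app X).symm (aux_mem_L_shift_one ht ih) trivial

lemma aux_mem_L_shift {L G : Set D} (ht : IsTStructure D L G) {X : D} (hX : X ∈ L)
    (n : ℤ) (hn : 0 ≤ n) : X⟦n⟧ ∈ L := by
  obtain ⟨k, rfl⟩ := Int.eq_ofNat_of_zero_le hn
  exact aux_mem_L_shift_nat ht hX k

lemma aux_mem_G_negshift_nat {L G : Set D} (ht : IsTStructure D L G) {X : D} (hX : X ∈ G)
    (k : ℕ) : X⟦(-(k : ℤ))⟧ ∈ G := by
  have h : IsTStructureOn D Set.univ L G := ht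
  induction k with
  | zero =>
    simp only [Nat.cast_zero, neg_zero]
    exact h.isoG ((shiftFunctorZero D ℤ).app X).symm hX trivial
  | succ k ih =>
    refine h.isoG ((shiftFunctorAdd' D (-(k : ℤ)) (-1) (-((k + 1 : ℕ) : ℤ))
      (by push_cast; ring)).app X).symm (h.shiftG ⟨X⟦(-(k : ℤ))⟧, ih, ⟨Iso.refl _⟩⟩) trivial

lemma aux_mem_G_negshift {L G : Set D} (ht : IsTStructure D L G) {X : D} (hX : X ∈ G)
    (n : ℤ) (hn : 0 ≤ n) : X⟦-n⟧ ∈ G := by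
  obtain ⟨k, rfl⟩ := Int.eq_ofNat_of_zero_le hn
  exact aux_mem_G_negshift_nat ht hX k

lemma aux_negshift_mem_shiftSetG {L G : Set D} (ht : IsTStructure D L G) {X : D}
    (hX : X ∈ G) (n : ℤ) (hn : 1 ≤ n) : X⟦-n⟧ ∈ shiftSet D G (-1) := by
  refine ⟨X⟦-(n - 1)⟧, aux_mem_G_negshift ht hX (n - 1) (by omega), ⟨?_⟩⟩
  exact (shiftFunctorAdd' D (-(n - 1)) (-1) (-n) (by ring)).app X

/-- an object left-orthogonal to `G[-1]` lies in `L`. -/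
lemma aux_mem_L_of_orth {L G : Set D} (ht : IsTStructure D L G) {X : D}
    (hX : ∀ Y ∈ shiftSet D G (-1), ∀ f : X ⟶ Y, f = 0) : X ∈ L := by
  have h : IsTStructureOn D Set.univ L G := ht
  obtain ⟨B, C, f, g, w, hB, hC, hT⟩ := h.cover X trivial
  have hg : g = 0 := hX C hC g
  obtain ⟨v, hv⟩ := Pretriangulated.Triangle.yoneda_exact₃ (Triangle.mk f g w) hT (𝟙 C)
    (by simp [hg]; exact zero_comp)
  have hv0 : v = 0 := h.hom_zero _ (aux_mem_L_shift_one ht hB) C hC v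
  have hzC : IsZero C := by
    rw [IsZero.iff_id_eq_zero, hv, hv0, comp_zero]; exact rfl
  have : IsIso ((Triangle.mk f g w).mor₁) :=
    (Pretriangulated.Triangle.isZero₃_iff_isIso₁ _ hT).1 hzC
  exact h.isoL (@asIso _ _ _ _ _ this) hB trivial

/-- an object right-orthogonal to `L` lies in `G[-1]`. -/
lemma aux_mem_Gneg_of_orth {L G : Set D} (ht : IsTStructure D L G) {X : D}
    (hX : ∀ W ∈ L, ∀ f : W ⟶ X, f = 0) : X ∈ shiftSet D G (-1) := by
  have h : IsTStructureOn D Set.univ L G := ht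
  obtain ⟨B, C, f, g, w, hB, hC, hT⟩ := h.cover X trivial
  have hf : f = 0 := hX B hB f
  obtain ⟨v, hv⟩ := Pretriangulated.Triangle.coyoneda_exact₁ (Triangle.mk f g w) hT
    (𝟙 (B⟦(1 : ℤ)⟧)) (by
      refine (id_comp _).trans ?_
      show f⟦(1 : ℤ)⟧' = 0
      rw [hf, Functor.map_zero])
  have hv0 : v = 0 := h.hom_zero _ (aux_mem_L_shift_one ht hB) C hC v
  have hzB1 : IsZero (B⟦(1 : ℤ)⟧) := by
    rw [IsZero.iff_id_eq_zero, hv, hv0, zero_comp]; exact rfl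
  have hzB : IsZero B :=
    ((shiftFunctor D (-1 : ℤ)).map_isZero hzB1).of_iso (shiftShiftNeg B (1 : ℤ)).symm
  have : IsIso ((Triangle.mk f g w).mor₂) :=
    (Pretriangulated.Triangle.isZero₁_iff_isIso₂ _ hT).1 hzB
  exact shiftSet_iso (show X ≅ C from @asIso _ _ _ _ _ this) hC

/-- the key one-sided inclusion. -/
lemma aux_subset (m : ℤ) (hm : 1 ≤ m) {E₁ E₂ : Set D}
    (h₂ : IsExtendedHeart D m E₂)
    (hA : E₁ ⊆ starSet D (shiftSet D E₂ m) E₂)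
    (hB : E₁ ⊆ starSet D E₂ (shiftSet D E₂ (-m))) : E₁ ⊆ E₂ := by
  obtain ⟨L, G, ht, rfl⟩ := h₂
  have h : IsTStructureOn D Set.univ L G := ht
  intro X hX₁
  constructor
  · -- `X ∈ shiftSet D G (m-1)`
    obtain ⟨Cc, Dd, f, g, w, hCc, hDd, hT⟩ := hB hX₁
    -- shift the triangle by `-m`
    have hT' : (Pretriangulated.Triangle.shiftFunctor D (-m)).obj (Triangle.mk f g w) ∈
        distTriang D := Pretriangulated.Triangle.shift_distinguished _ hT (-m)
    set T' := (Pretriangulated.Triangle.shiftFunctor D (-m)).obj (Triangle.mk f g w) with hT'def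
    -- `T'.obj₁ = Cc⟦-m⟧ ∈ G[-1]`
    obtain ⟨Bg, hBg, ⟨e₁⟩⟩ := hCc.1
    have hobj₁ : (Cc⟦-m⟧ : D) ∈ shiftSet D G (-1) := by
      refine ⟨Bg, hBg, ⟨?_⟩⟩
      exact (shiftFunctor D (-m)).mapIso e₁ ≪≫
        ((shiftFunctorAdd' D (m - 1) (-m) (-1) (by ring)).app Bg).symm
    -- `T'.obj₃ = Dd⟦-m⟧ ∈ G[-1]`
    obtain ⟨W₀, hW₀, ⟨e₂⟩⟩ := hDd
    obtain ⟨Bg', hBg', ⟨e₃⟩⟩ := hW₀.1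
    have hobj₃ : (Dd⟦-m⟧ : D) ∈ shiftSet D G (-1) := by
      have j1 : (Dd⟦-m⟧ : D) ≅ (W₀⟦-m⟧)⟦-m⟧ := (shiftFunctor D (-m)).mapIso e₂
      have j2 : (Bg'⟦(-1 : ℤ)⟧ : D) ≅ (Bg'⟦(m - 1 : ℤ)⟧)⟦-m⟧ :=
        (shiftFunctorAdd' D (m - 1) (-m) (-1) (by ring)).app Bg'
      have j3 : (W₀⟦-m⟧ : D) ≅ Bg'⟦(-1 : ℤ)⟧ :=
        (shiftFunctor D (-m)).mapIso e₃ ≪≫ j2.symm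
      have j4 : (Bg'⟦-(m + 1)⟧ : D) ≅ (Bg'⟦(-1 : ℤ)⟧)⟦-m⟧ :=
        (shiftFunctorAdd' D (-1) (-m) (-(m + 1)) (by ring)).app Bg'
      exact shiftSet_iso (A := Dd⟦-m⟧) (B := Bg'⟦-(m + 1)⟧)
        (j1 ≪≫ (shiftFunctor D (-m)).mapIso j3 ≪≫ j4.symm)
        (aux_negshift_mem_shiftSetG ht hBg' (m + 1) (by omega))
    -- orthogonality for `X⟦-m⟧`
    have horth : (X⟦-m⟧ : D) ∈ shiftSet D G (-1) := by
      refine aux_mem_Gneg_of_orth ht ?_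
      intro W hW u
      have h₂0 : u ≫ T'.mor₂ = 0 := h.hom_zero W hW _ hobj₃ _
      obtain ⟨v, hv⟩ := Pretriangulated.Triangle.coyoneda_exact₂ T' hT' u h₂0
      rw [hv, h.hom_zero W hW _ hobj₁ v]; exact zero_comp
    obtain ⟨Bg'', hBg'', ⟨e₄⟩⟩ := horth
    refine ⟨Bg'', hBg'', ⟨?_⟩⟩
    exact (shiftNegShift X m).symm ≪≫ (shiftFunctor D m).mapIso e₄ ≪≫
      ((shiftFunctorAdd' D (-1) m (m - 1) (by ring)).app Bg'').symm
  · -- `X ∈ L`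
    obtain ⟨A, Bb, f, g, w, hA', hB', hT⟩ := hA hX₁
    refine aux_mem_L_of_orth ht ?_
    intro Y hY u
    obtain ⟨Z, hZ, ⟨e⟩⟩ := hA'
    have hAL : A ∈ L := h.isoL e.symm (aux_mem_L_shift ht hZ.2 m (by omega)) trivial
    have h₁0 : (Triangle.mk f g w).mor₁ ≫ u = 0 := h.hom_zero A hAL Y hY _
    obtain ⟨v, hv⟩ := Pretriangulated.Triangle.yoneda_exact₂ (Triangle.mk f g w) hT u h₁0
    rw [hv, h.hom_zero Bb hB'.2 Y hY v]; exact comp_zero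

end Aux

/-- antisymmetry of `≤` on `m`-extended hearts:
if `ℰ₁ ≤ ℰ₂` and `ℰ₂ ≤ ℰ₁`, then `ℰ₁ = ℰ₂`. -/
theorem stmt12 (m : ℤ) (hm : 1 ≤ m) (E₁ E₂ : Set D)
    (h₁ : IsExtendedHeart D m E₁) (h₂ : IsExtendedHeart D m E₂)
    (h12 : extHeartLE D m E₁ E₂) (h21 : extHeartLE D m E₂ E₁) :
    E₁ = E₂ :=
  Set.Subset.antisymm (aux_subset m hm h₂ h12.1 h21.2) (aux_subset m hm h₁ h21.1 h12.2)
end
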